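/- arXiv:1207.0723 — 3 statements merged into one kernel-verified Lean document; each statement's English description precedes it below -/
import Mathlib

section
/- Fix an integer N ≥ 1 and γ ∈ ℝ. For every f ∈ C^∞(ℝ^N, ℂ), every w ∈ S_N and every regular point x ∈ ℝ^N_reg, one has (P^γ_N (w^γ f))(x) = (P^γ_N f)(w^{-1} x); that is, the propagation operator intertwines the integral-reflection action w^γ with the geometric permutation action of S_N. -/
open scoped BigOperators
open MeasureTheory Complex

noncomputable section

abbrev Pt (N : ℕ) := Fin N → ℝ
abbrev Fn (N : ℕ) := Pt N → ℂ

/-- The permutation `w` acting on points: `(w • x) j = x (w⁻¹ j)`. -/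
def permPt {N : ℕ} (w : Equiv.Perm (Fin N)) (x : Pt N) : Pt N := fun j => x (w⁻¹ j)

/-- The fundamental (positive) alcove `ℝ^N_+ = {x : x_1 > … > x_N}`. -/
def posAlcove (N : ℕ) : Set (Pt N) := {x | ∀ i j : Fin N, i < j → x j < x i}

/-- The alcove `w⁻¹ ℝ^N_+`. -/
def alcove {N : ℕ} (w : Equiv.Perm (Fin N)) : Set (Pt N) := {x | permPt w x ∈ posAlcove N}

/-- Regular vectors: pairwise distinct coordinates. -/
def regPts (N : ℕ) : Set (Pt N) := {x | ∀ i j : Fin N, i ≠ j → x i ≠ x j}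

/-- Partial derivative in the `j`-th coordinate. -/
def pd {N : ℕ} (j : Fin N) (f : Fn N) : Fn N :=
  fun x => deriv (fun t : ℝ => f (Function.update x j t)) (x j)

/-- The plane wave `e^{iλ}`. -/
def planeWave {N : ℕ} (lam : Fin N → ℂ) : Fn N :=
  fun x => Complex.exp (Complex.I * ∑ j, lam j * (x j : ℂ))

/-- The integral operator `I_{jk}`:
`(I_{jk} f)(x) = ∫_0^{x_j-x_k} f(x - y(e_j - e_k)) dy`. -/
def Iop {N : ℕ} (j k : Fin N) (f : Fn N) : Fn N :=
  fun x => ∫ y in (0:ℝ)..(x j - x k),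
    f (Function.update (Function.update x j (x j - y)) k (x k + y))

/-- The integral-reflection operator `s^γ` associated to the transposition `(j k)`. -/
def sIR {N : ℕ} (γ : ℝ) (j k : Fin N) (f : Fn N) : Fn N :=
  fun x => f (permPt (Equiv.swap j k) x) + (γ : ℂ) * Iop j k f x

/-- The integral-reflection operator for the simple transposition `s_j = (j, j+1)`
(zero-based); identity for out-of-range `j`. -/
def sSimple {N : ℕ} (γ : ℝ) (j : ℕ) (f : Fn N) : Fn N :=
  if h : j + 1 < N then sIR γ ⟨j, Nat.lt_of_succ_lt h⟩ ⟨j + 1, h⟩ f else f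

/-- `w^γ` computed from a word `L` of simple reflections:
`wordOp γ [i₁,…,i_l] f = s_{i₁}^γ (⋯ (s_{i_l}^γ f))`. -/
def wordOp {N : ℕ} (γ : ℝ) (L : List ℕ) (f : Fn N) : Fn N :=
  L.foldr (fun j g => sSimple γ j g) f

/-- The simple transposition `s_j` (zero-based); identity for out-of-range `j`. -/
def simpleT (N : ℕ) (j : ℕ) : Equiv.Perm (Fin N) :=
  if h : j + 1 < N then Equiv.swap ⟨j, Nat.lt_of_succ_lt h⟩ ⟨j + 1, h⟩ else 1

/-- The permutation represented by a word of simple reflections. -/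
def wordPerm (N : ℕ) (L : List ℕ) : Equiv.Perm (Fin N) := (L.map (simpleT N)).prod

/-- `P` is the propagation operator `P^γ_N`: for continuous `f`, `P f` is continuous and
on the alcove `w⁻¹ ℝ^N_+` it equals `(w^γ f)(w x)`, where `w^γ` may be computed from any
word of simple reflections representing `w` (the operators `s_j^γ` satisfy the relations
of the symmetric group, so this does not depend on the word). -/
def IsPropagation {N : ℕ} (γ : ℝ) (P : Fn N → Fn N) : Prop :=
  ∀ f : Fn N, Continuous f →
    Continuous (P f) ∧
    ∀ (w : Equiv.Perm (Fin N)) (L : List ℕ),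
      (∀ j ∈ L, j + 1 < N) → wordPerm N L = w →
      ∀ x ∈ alcove w, P f x = wordOp γ L f (permPt w x)

open scoped Classical in
/-- The operator `Λ_j` entering the Dunkl-type operator `∂_j^γ = ∂_j - γ Λ_j`. -/
def LambdaOp {N : ℕ} (j : Fin N) (f : Fn N) : Fn N := fun x =>
  (∑ k : Fin N, if k < j ∧ x k < x j then f (permPt (Equiv.swap j k) x) else 0)
    - ∑ k : Fin N, if j < k ∧ x j < x k then f (permPt (Equiv.swap j k) x) else 0

/-- Membership in `CB^∞(ℝ^N)`: continuous, and smooth on every alcove. -/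
def CBsmooth {N : ℕ} (f : Fn N) : Prop :=
  Continuous f ∧ ∀ w : Equiv.Perm (Fin N), ContDiffOn ℝ (⊤ : ℕ∞) f (alcove w)

/-- Membership in `sol^γ_λ`: lies in `CB^∞(ℝ^N)` and satisfies `∂_j^γ f = iλ_j f`
on the regular vectors for every `j`. -/
def memSol {N : ℕ} (γ : ℝ) (lam : Fin N → ℂ) (f : Fn N) : Prop :=
  CBsmooth f ∧ ∀ j : Fin N, ∀ x ∈ regPts N,
    pd j f x - (γ : ℂ) * LambdaOp j f x = Complex.I * lam j * f x

open scoped Classical in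
/-- Coxeter length = number of inversions. -/
def invCount {N : ℕ} (w : Equiv.Perm (Fin N)) : ℕ :=
  (Finset.univ.filter fun p : Fin N × Fin N => p.1 < p.2 ∧ w p.2 < w p.1).card

/-- `x + δ(e_j - e_k)`. -/
def jumpShift {N : ℕ} (j k : Fin N) (δ : ℝ) (x : Pt N) : Pt N :=
  Function.update (Function.update x j (x j + δ)) k (x k - δ)

/-- The derivative jump conditions with coupling `γ`: at every subregular point of
every wall `{x_j = x_k}` (`j < k`), the jump of `(∂_j - ∂_k) f` equals `2γ f(x)`. -/
def SatisfiesJump {N : ℕ} (γ : ℝ) (f : Fn N) : Prop :=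
  ∀ j k : Fin N, j < k → ∀ x : Pt N, x j = x k →
    (∀ l m : Fin N, l < m → ¬(l = j ∧ m = k) → x l ≠ x m) →
    Filter.Tendsto
      (fun δ : ℝ =>
        (pd j f (jumpShift j k δ x) - pd k f (jumpShift j k δ x))
          - (pd j f (jumpShift j k (-δ) x) - pd k f (jumpShift j k (-δ) x)))
      (nhdsWithin 0 (Set.Ioi 0)) (nhds (2 * (γ : ℂ) * f x))

open scoped Classical in
/-- Indicator of a strictly decreasing chain of real numbers. -/
def chainInd (l : List ℝ) : ℂ := if List.Chain' (fun a b => b < a) l then 1 else 0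

/-- Iterated integral entering `ê⁻_{μ;i}`: for the list `[i₁,…,i_n]`, the upper limit of
the `y_m`-integral is `x_{i_{m-1}}` (threaded through `ub`, starting at `x_{N+1}`), the lower
limit is `x_{i_m}`, and the coordinate `i_m` of the argument is replaced by `y_m`. -/
def eMinusAux {N : ℕ} (μ : ℂ) (f : Fn N) (x : Pt (N + 1)) :
    List (Fin N) → ℝ → Pt N → ℂ
  | [], _, z => f z
  | i :: rest, ub, z =>
      ∫ y in (x i.castSucc)..ub,
        Complex.exp (Complex.I * μ * ((x i.castSucc - y : ℝ) : ℂ)) *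
          eMinusAux μ f x rest (x i.castSucc) (Function.update z i y)

/-- The elementary creation operator `ê⁻_{μ;i}`. -/
def ehatMinus {N : ℕ} (μ : ℂ) (l : List (Fin N)) (f : Fn N) : Fn (N + 1) :=
  fun x =>
    chainInd (x (Fin.last N) :: l.map fun i => x i.castSucc) *
      Complex.exp (Complex.I * μ * ((x (Fin.last N) : ℝ) : ℂ)) *
      eMinusAux μ f x l (x (Fin.last N)) (fun j => x j.castSucc)

/-- Iterated integral entering `ê⁺_{μ;i}`: the lower limit of the `y_m`-integral is
`x_{i_{m+1}+1}` (the coordinate of the next entry, or `x_1` at the end), the upper limit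
is `x_{i_m+1}`, and the coordinate `i_m` of the argument is replaced by `y_m`. -/
def ePlusAux {N : ℕ} (μ : ℂ) (f : Fn N) (x : Pt (N + 1)) :
    List (Fin N) → Pt N → ℂ
  | [], z => f z
  | i :: rest, z =>
      ∫ y in (match rest with
              | [] => x 0
              | j :: _ => x j.succ)..(x i.succ),
        Complex.exp (Complex.I * μ * ((x i.succ - y : ℝ) : ℂ)) *
          ePlusAux μ f x rest (Function.update z i y)

/-- The elementary creation operator `ê⁺_{μ;i}`. -/
def ehatPlus {N : ℕ} (μ : ℂ) (l : List (Fin N)) (f : Fn N) : Fn (N + 1) :=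
  fun x =>
    chainInd ((l.map fun i => x i.succ) ++ [x 0]) *
      Complex.exp (Complex.I * μ * ((x 0 : ℝ) : ℂ)) *
      ePlusAux μ f x l (fun j => x j.succ)

/-- The non-symmetric creation operator
`b⁻_μ = ∑_{n=0}^N γⁿ ∑_{i ∈ 𝔦ⁿ_{[1,N]}} ê⁻_{μ;i}` (tuples of pairwise distinct indices
are encoded as injections `Fin n ↪ Fin N`). -/
def bMinus {N : ℕ} (γ : ℝ) (μ : ℂ) (f : Fn N) : Fn (N + 1) :=
  fun x => ∑ n ∈ Finset.range (N + 1), (γ : ℂ) ^ n *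
    ∑ e : Fin n ↪ Fin N, ehatMinus μ (List.ofFn ⇑e) f x

/-- The non-symmetric creation operator `b⁺_μ`. -/
def bPlus {N : ℕ} (γ : ℝ) (μ : ℂ) (f : Fn N) : Fn (N + 1) :=
  fun x => ∑ n ∈ Finset.range (N + 1), (γ : ℂ) ^ n *
    ∑ e : Fin n ↪ Fin N, ehatPlus μ (List.ofFn ⇑e) f x

/-- `φ̌⁺`: evaluate the first coordinate at `x⁺`. -/
def phiCheckPlus {k : ℕ} (xp : ℝ) (f : Fn (k + 1)) : Fn k := fun x => f (Fin.cons xp x)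

/-- `φ̌⁻`: evaluate the last coordinate at `x⁻`. -/
def phiCheckMinus {k : ℕ} (xm : ℝ) (f : Fn (k + 1)) : Fn k := fun x => f (Fin.snoc x xm)

/-- `b^ε_μ`, `ε = +` encoded as `true` and `ε = -` as `false`. -/
def bEps (ε : Bool) {k : ℕ} (γ : ℝ) (μ : ℂ) (f : Fn k) : Fn (k + 1) :=
  if ε then bPlus γ μ f else bMinus γ μ f

/-- `ê^ε_{μ;i}`. -/
def ehatEps (ε : Bool) {N : ℕ} (μ : ℂ) (l : List (Fin N)) (f : Fn N) : Fn (N + 1) :=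
  if ε then ehatPlus μ l f else ehatMinus μ l f

/-- `φ̌^ε`. -/
def phiEps (ε : Bool) {k : ℕ} (xp xm : ℝ) (f : Fn (k + 1)) : Fn k :=
  if ε then phiCheckPlus xp f else phiCheckMinus xm f

/-- `a^ε_μ = φ̌^ε ∘ b^ε_μ`. -/
def aEps (ε : Bool) {k : ℕ} (γ : ℝ) (xp xm : ℝ) (μ : ℂ) (f : Fn k) : Fn k :=
  phiEps ε xp xm (bEps ε γ μ f)

/-- The sign `ε = ±1` of `ε ∈ {+,-}`. -/
def sgn (ε : Bool) : ℂ := if ε then 1 else -1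

/-- `s⁺` (swap of the first two coordinates of `ℝ^{N+2}`) resp. `s⁻` (swap of the last two). -/
def sEps (ε : Bool) (N : ℕ) : Equiv.Perm (Fin (N + 2)) :=
  if ε then Equiv.swap 0 1 else Equiv.swap ⟨N, by omega⟩ ⟨N + 1, by omega⟩

/-- Iterated integral entering `č⁺_{μ;i}` (the variables `y_1,…,y_n`). -/
def cAuxPlus {N : ℕ} (μ : ℂ) (xp : ℝ) (x : Pt N) (g : Pt N → ℂ) :
    List (Fin N) → Pt N → ℂ
  | [], z => g z
  | i :: rest, z =>
      ∫ y in (match rest with | [] => xp | j :: _ => x j)..(x i),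
        Complex.exp (Complex.I * μ * ((x i - y : ℝ) : ℂ)) *
          cAuxPlus μ xp x g rest (Function.update z i y)

/-- The elementary operator `č⁺_{μ;i}` (with `x_{i_0} := x⁻` and `x_{i_{n+1}} := x⁺`;
the variable `y_0` is plugged in as the final argument of `f`). -/
def cCheckPlus {N : ℕ} (μ : ℂ) (xp xm : ℝ) (l : List (Fin N)) (f : Fn (N + 1)) : Fn N :=
  fun x =>
    chainInd (l.map x) * Complex.exp (Complex.I * μ * ((xp : ℝ) : ℂ)) *
      ∫ y0 in (match l with | [] => xp | i :: _ => x i)..xm,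
        Complex.exp (Complex.I * μ * ((xm - y0 : ℝ) : ℂ)) *
          cAuxPlus μ xp x (fun z => f (Fin.snoc z y0)) l x

/-- Iterated integral entering `č⁻_{μ;i}` (the variables `y_1,…,y_{n+1}`;
the variable `y_{n+1}` is plugged in as the first argument of `f`). -/
def cAuxMinus {N : ℕ} (μ : ℂ) (xp : ℝ) (x : Pt N) (f : Fn (N + 1)) :
    List (Fin N) → ℝ → Pt N → ℂ
  | [], ub, z =>
      ∫ y in xp..ub, Complex.exp (Complex.I * μ * ((xp - y : ℝ) : ℂ)) * f (Fin.cons y z)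
  | i :: rest, ub, z =>
      ∫ y in (x i)..ub,
        Complex.exp (Complex.I * μ * ((x i - y : ℝ) : ℂ)) *
          cAuxMinus μ xp x f rest (x i) (Function.update z i y)

/-- The elementary operator `č⁻_{μ;i}` (with `x_{i_0} := x⁻` and `x_{i_{n+1}} := x⁺`). -/
def cCheckMinus {N : ℕ} (μ : ℂ) (xp xm : ℝ) (l : List (Fin N)) (f : Fn (N + 1)) : Fn N :=
  fun x => chainInd (l.map x) * Complex.exp (Complex.I * μ * ((xm : ℝ) : ℂ)) *
    cAuxMinus μ xp x f l xm x

/-- `č^ε_{μ;i}`. -/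
def cCheckEps (ε : Bool) {N : ℕ} (μ : ℂ) (xp xm : ℝ) (l : List (Fin N)) (f : Fn (N + 1)) :
    Fn N :=
  if ε then cCheckPlus μ xp xm l f else cCheckMinus μ xp xm l f

/-- The operator `c⁺_μ = ∑_{n=0}^N γ^{n+1} ∑_i č⁺_{μ;i}`. -/
def cPlusOp {N : ℕ} (γ : ℝ) (μ : ℂ) (xp xm : ℝ) (f : Fn (N + 1)) : Fn N :=
  fun x => ∑ n ∈ Finset.range (N + 1), (γ : ℂ) ^ (n + 1) *
    ∑ e : Fin n ↪ Fin N, cCheckPlus μ xp xm (List.ofFn ⇑e) f x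

/-- The operator `c⁻_μ = ∑_{n=0}^N γ^{n+1} ∑_i č⁻_{μ;i}`. -/
def cMinusOp {N : ℕ} (γ : ℝ) (μ : ℂ) (xp xm : ℝ) (f : Fn (N + 1)) : Fn N :=
  fun x => ∑ n ∈ Finset.range (N + 1), (γ : ℂ) ^ (n + 1) *
    ∑ e : Fin n ↪ Fin N, cCheckMinus μ xp xm (List.ofFn ⇑e) f x

/-- `c^ε_μ`. -/
def cEps (ε : Bool) {N : ℕ} (γ : ℝ) (μ : ℂ) (xp xm : ℝ) (f : Fn (N + 1)) : Fn N :=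
  if ε then cPlusOp γ μ xp xm f else cMinusOp γ μ xp xm f

/-- The closed box `J^M = [x⁺,x⁻]^M`. -/
def box (M : ℕ) (xp xm : ℝ) : Set (Pt M) := {x | ∀ j, x j ∈ Set.Icc xp xm}

/-- The `L²(J^M)` inner product `⟨u,v⟩_M = ∫_{J^M} u · conj v`. -/
def ipJ {M : ℕ} (xp xm : ℝ) (u v : Fn M) : ℂ :=
  ∫ x in box M xp xm, u x * (starRingEnd ℂ) (v x)

/-- Smooth functions compactly supported in the open box `(x⁺,x⁻)^M`. -/
def IsTestFn {M : ℕ} (xp xm : ℝ) (f : Fn M) : Prop :=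
  ContDiff ℝ (⊤ : ℕ∞) f ∧ HasCompactSupport f ∧ ∀ x, f x ≠ 0 → ∀ j, x j ∈ Set.Ioo xp xm

/-- The symmetrizer `𝒮_N = (1/N!) ∑_{w ∈ S_N} w`. -/
def symN (N : ℕ) (f : Fn N) : Fn N :=
  fun x => (N.factorial : ℂ)⁻¹ * ∑ w : Equiv.Perm (Fin N), f (permPt w⁻¹ x)

open scoped Classical in
/-- `G^γ_μ = ∏_{j<k} (μ_j - μ_k - iγ)/(μ_j - μ_k)`. -/
def Gcoef {N : ℕ} (γ : ℝ) (mu : Fin N → ℂ) : ℂ :=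
  ∏ p ∈ Finset.univ.filter (fun p : Fin N × Fin N => p.1 < p.2),
    (mu p.1 - mu p.2 - Complex.I * (γ : ℂ)) / (mu p.1 - mu p.2)

/-- The decreasing rearrangement `x↓`. -/
def decRearrange {N : ℕ} (x : Pt N) : Pt N := fun j => x (Tuple.sort x (Fin.rev j))

/-- The Bethe wavefunction
`Ψ_λ(x) = (1/N!) ∑_{w ∈ S_N} G^γ_{wλ} exp(i ∑_j (wλ)_j (x↓)_j)`. -/
def Bethe {N : ℕ} (γ : ℝ) (lam : Fin N → ℂ) : Fn N :=
  fun x => (N.factorial : ℂ)⁻¹ * ∑ w : Equiv.Perm (Fin N),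
    Gcoef γ (fun j => lam (w⁻¹ j)) *
      Complex.exp (Complex.I * ∑ j, lam (w⁻¹ j) * ((decRearrange x j : ℝ) : ℂ))

/-- The transpositions of consecutive entries of a list:
`adjSwaps [a₁,…,a_m] = [(a₁ a₂), (a₂ a₃), …, (a_{m-1} a_m)]`. -/
def adjSwaps {M : ℕ} : List (Fin M) → List (Equiv.Perm (Fin M))
  | [] => []
  | [_] => []
  | a :: b :: rest => Equiv.swap a b :: adjSwaps (b :: rest)

/-- `b⁻_{λ_N} (b⁻_{λ_{N-1}} (⋯ (b⁻_{λ_1} 1)))`. -/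
def iterBMinus (γ : ℝ) : (N : ℕ) → (Fin N → ℂ) → Fn N
  | 0, _ => fun _ => 1
  | N + 1, lam => bMinus γ (lam (Fin.last N)) (iterBMinus γ N (fun j => lam j.castSucc))

/-- `b⁺_{λ_1} (b⁺_{λ_2} (⋯ (b⁺_{λ_N} 1)))`. -/
def iterBPlus (γ : ℝ) : (N : ℕ) → (Fin N → ℂ) → Fn N
  | 0, _ => fun _ => 1
  | N + 1, lam => bPlus γ (lam 0) (iterBPlus γ N (fun j => lam j.succ))

-- Auxiliary lemmas for statement_1

lemma continuous_permPt {N : ℕ} (w : Equiv.Perm (Fin N)) : Continuous (permPt w) :=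
  continuous_pi fun _ => continuous_apply _

lemma continuous_Iop {N : ℕ} (j k : Fin N) {f : Fn N} (hf : Continuous f) :
    Continuous (Iop j k f) := by
  apply intervalIntegral.continuous_parametric_intervalIntegral_of_continuous (μ := volume)
    (f := fun x y => f (Function.update (Function.update x j (x j - y)) k (x k + y)))
  · apply hf.comp
    apply continuous_pi
    intro i
    show Continuous fun p : Pt N × ℝ =>
      Function.update (Function.update p.1 j (p.1 j - p.2)) k (p.1 k + p.2) i
    simp only [Function.update_apply]
    split_ifs <;> fun_prop
  · fun_prop

lemma continuous_sSimple {N : ℕ} (γ : ℝ) (j : ℕ) {f : Fn N} (hf : Continuous f) :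
    Continuous (sSimple γ j f) := by
  unfold sSimple
  split_ifs with h
  · exact ((hf.comp (continuous_permPt _)).add (continuous_const.mul (continuous_Iop _ _ hf)))
  · exact hf

lemma continuous_wordOp {N : ℕ} (γ : ℝ) (L : List ℕ) {f : Fn N} (hf : Continuous f) :
    Continuous (wordOp γ L f) := by
  induction L with
  | nil => exact hf
  | cons a L ih => exact continuous_sSimple γ a ih

lemma wordOp_append {N : ℕ} (γ : ℝ) (L1 L2 : List ℕ) (f : Fn N) :
    wordOp γ (L1 ++ L2) f = wordOp γ L1 (wordOp γ L2 f) := by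
  simp [wordOp, List.foldr_append]

lemma wordPerm_append (N : ℕ) (L1 L2 : List ℕ) :
    wordPerm N (L1 ++ L2) = wordPerm N L1 * wordPerm N L2 := by
  simp [wordPerm]

lemma permPt_mul {N : ℕ} (u v : Equiv.Perm (Fin N)) (x : Pt N) :
    permPt (u * v) x = permPt u (permPt v x) := by
  funext j; simp [permPt, mul_inv_rev]

lemma exists_word (N : ℕ) (hN : 1 ≤ N) (v : Equiv.Perm (Fin N)) :
    ∃ L : List ℕ, (∀ j ∈ L, j + 1 < N) ∧ wordPerm N L = v := by
  obtain ⟨n, rfl⟩ := Nat.exists_eq_succ_of_ne_zero (by omega : N ≠ 0)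
  have hv : v ∈ Submonoid.closure
      (Set.range fun i : Fin n => Equiv.swap i.castSucc i.succ) := by
    rw [Equiv.Perm.mclosure_swap_castSucc_succ]; trivial
  induction hv using Submonoid.closure_induction with
  | mem g hg =>
      obtain ⟨i, rfl⟩ := hg
      refine ⟨[i.val], by simp [Nat.succ_lt_succ i.isLt], ?_⟩
      simp only [wordPerm, List.map_cons, List.map_nil, List.prod_cons, List.prod_nil, mul_one]
      rw [simpleT, dif_pos (Nat.succ_lt_succ i.isLt)]
      congr 1
  | one => exact ⟨[], by simp, by simp [wordPerm]⟩
  | mul a b _ _ ha hb =>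
      obtain ⟨La, hLa, rfl⟩ := ha
      obtain ⟨Lb, hLb, rfl⟩ := hb
      refine ⟨La ++ Lb, ?_, wordPerm_append _ _ _⟩
      intro j hj
      rcases List.mem_append.1 hj with h | h
      exacts [hLa j h, hLb j h]

lemma exists_alcove {N : ℕ} (x : Pt N) (hx : x ∈ regPts N) :
    ∃ v : Equiv.Perm (Fin N), x ∈ alcove v := by
  set σ := Tuple.sort x with hσ
  refine ⟨(σ * Fin.revPerm)⁻¹, ?_⟩
  intro i j hij
  have h1 : permPt (σ * Fin.revPerm)⁻¹ x = fun j => x (σ (Fin.rev j)) := by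
    funext l; simp [permPt, Fin.revPerm]
  rw [h1]
  have hle : x (σ (Fin.rev j)) ≤ x (σ (Fin.rev i)) :=
    Tuple.monotone_sort x (le_of_lt ((Fin.rev_lt_rev).2 hij))
  refine lt_of_le_of_ne hle (hx _ _ ?_)
  intro h
  exact absurd (Fin.rev_injective (σ.injective h)) (ne_of_lt hij).symm

/-- the propagation operator intertwines the integral-reflection action
`w^γ` with the geometric action of `S_N`: `(P^γ_N (w^γ f))(x) = (P^γ_N f)(w⁻¹ x)` for
every smooth `f` and regular `x`. (`w^γ` is computed via any word `L` of simple
reflections representing `w`.) -/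
theorem statement_1 (N : ℕ) (hN : 1 ≤ N) (γ : ℝ) (P : Fn N → Fn N)
    (hP : IsPropagation γ P) (f : Fn N) (hf : ContDiff ℝ (⊤ : ℕ∞) f)
    (w : Equiv.Perm (Fin N)) (L : List ℕ) (hL : ∀ j ∈ L, j + 1 < N)
    (hLw : wordPerm N L = w) (x : Pt N) (hx : x ∈ regPts N) :
    P (wordOp γ L f) x = P f (permPt w⁻¹ x)  := by
  obtain ⟨v, hv⟩ := exists_alcove x hx
  obtain ⟨L', hL', hL'v⟩ := exists_word N hN v
  have h1 := (hP (wordOp γ L f) (continuous_wordOp γ L hf.continuous)).2 v L' hL' hL'v x hv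
  have key : permPt (v * w) (permPt w⁻¹ x) = permPt v x := by
    rw [← permPt_mul, mul_assoc, mul_inv_cancel, mul_one]
  have hx2 : permPt w⁻¹ x ∈ alcove (v * w) := by
    show permPt (v * w) (permPt w⁻¹ x) ∈ posAlcove N
    rw [key]; exact hv
  have h2 := (hP f hf.continuous).2 (v * w) (L' ++ L) ?_ ?_ (permPt w⁻¹ x) hx2
  · rw [h1, h2, wordOp_append, key]
  · intro j hj
    rcases List.mem_append.1 hj with h | h
    exacts [hL' j h, hL j h]
  · rw [wordPerm_append, hL'v, hLw]


end
end

section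
/- Fix an integer N ≥ 1, γ ∈ ℝ and λ ∈ ℂ^N. If f ∈ sol^γ_λ satisfies f(0) = 0, then f = 0 identically on ℝ^N. -/
open scoped BigOperators
open MeasureTheory Complex

noncomputable section

open scoped Classical in
/-- Number of "inversions" of a point: pairs `p.1 < p.2` with `y p.1 < y p.2`. -/
def invNumPt {N : ℕ} (y : Pt N) : ℕ :=
  (Finset.univ.filter fun p : Fin N × Fin N => p.1 < p.2 ∧ y p.1 < y p.2).card

lemma invNumPt_swap_lt {N : ℕ} {y : Pt N} {a b : Fin N} (hab : a < b) (hy : y a < y b) :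
    invNumPt (y ∘ Equiv.swap a b) < invNumPt y := by
  classical
  set σ : Equiv.Perm (Fin N) := Equiv.swap a b with hσ
  set s : Finset (Fin N × Fin N) :=
    Finset.univ.filter fun p : Fin N × Fin N => p.1 < p.2 ∧ y (σ p.1) < y (σ p.2) with hs
  set t : Finset (Fin N × Fin N) :=
    Finset.univ.filter fun p : Fin N × Fin N => p.1 < p.2 ∧ y p.1 < y p.2 with ht
  have hmem_s : ∀ p : Fin N × Fin N, p ∈ s ↔ (p.1 < p.2 ∧ y (σ p.1) < y (σ p.2)) := by
    intro p; simp [hs]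
  have hmem_t : ∀ p : Fin N × Fin N, p ∈ t ↔ (p.1 < p.2 ∧ y p.1 < y p.2) := by
    intro p; simp [ht]
  -- classification of "flipped" elements of s
  have hclass : ∀ p ∈ s, ¬ (σ p.1 < σ p.2) →
      ((p.1 = a ∧ p.2 ≠ a ∧ p.2 ≠ b) ∨ (p.2 = b ∧ p.1 ≠ a ∧ p.1 ≠ b)) ∧ y p.1 < y p.2 := by
    intro p hp hflip
    rw [hmem_s] at hp
    obtain ⟨hplt, hpz⟩ := hp
    by_cases h1a : p.1 = a
    · by_cases h2b : p.2 = b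
      · exfalso; rw [h1a, h2b, Equiv.swap_apply_left, Equiv.swap_apply_right] at hpz
        exact absurd hy (not_lt.2 hpz.le)
      · have h2a : p.2 ≠ a := by rintro rfl; rw [h1a] at hplt; exact lt_irrefl _ hplt
        have hσ2 : σ p.2 = p.2 := Equiv.swap_apply_of_ne_of_ne h2a h2b
        rw [h1a, Equiv.swap_apply_left, hσ2] at hpz
        refine ⟨Or.inl ⟨h1a, h2a, h2b⟩, ?_⟩
        rw [h1a]; exact hy.trans hpz
    · by_cases h1b : p.1 = b
      · exfalso
        -- p.1 = b, so b < p.2, σ p.1 = a, σ p.2 = p.2, flip says ¬ a < p.2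
        have h2a : p.2 ≠ a := fun h => absurd ((h1b ▸ hplt).trans_eq h) (not_lt.2 hab.le)
        have h2b : p.2 ≠ b := fun h => absurd (hplt.trans_eq h) (by rw [h1b]; exact lt_irrefl b)
        have hσ2 : σ p.2 = p.2 := Equiv.swap_apply_of_ne_of_ne h2a h2b
        rw [h1b, Equiv.swap_apply_right, hσ2] at hflip
        exact hflip (hab.trans (h1b ▸ hplt))
      · -- p.1 ∉ {a,b}
        have hσ1 : σ p.1 = p.1 := Equiv.swap_apply_of_ne_of_ne h1a h1b
        by_cases h2a : p.2 = a
        · exfalso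
          rw [hσ1, h2a, Equiv.swap_apply_left] at hflip
          exact hflip ((hplt.trans_eq h2a).trans hab)
        · by_cases h2b : p.2 = b
          · have : σ p.2 = a := by rw [h2b, Equiv.swap_apply_right]
            rw [hσ1, this] at hpz
            refine ⟨Or.inr ⟨h2b, h1a, h1b⟩, ?_⟩
            rw [h2b]; exact hpz.trans hy
          · exfalso
            have hσ2 : σ p.2 = p.2 := Equiv.swap_apply_of_ne_of_ne h2a h2b
            rw [hσ1, hσ2] at hflip; exact hflip hplt
  -- the injection φ
  set φ : Fin N × Fin N → Fin N × Fin N :=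
    fun p => if σ p.1 < σ p.2 then (σ p.1, σ p.2) else p with hφ
  have hab' : (a, b) ∈ t := (hmem_t _).2 ⟨hab, hy⟩
  have hmaps : ∀ p ∈ s, φ p ∈ t.erase (a, b) := by
    intro p hp
    rw [Finset.mem_erase]
    by_cases hflip : σ p.1 < σ p.2
    · have hpz := ((hmem_s p).1 hp).2
      constructor
      · rintro hq
        obtain ⟨h1, h2⟩ : σ p.1 = a ∧ σ p.2 = b := by simpa [hφ, hflip] using hq
        have e1 : p.1 = b := by
          have h := congrArg σ h1
          simp only [hσ, Equiv.swap_apply_self, Equiv.swap_apply_left] at h; exact h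
        have e2 : p.2 = a := by
          have h := congrArg σ h2
          simp only [hσ, Equiv.swap_apply_self, Equiv.swap_apply_right] at h; exact h
        have := ((hmem_s p).1 hp).1
        rw [e1, e2] at this; exact absurd (this.trans hab) (lt_irrefl b)
      · rw [hmem_t]; simp only [hφ, if_pos hflip]; exact ⟨hflip, hpz⟩
    · obtain ⟨hcls, hyp⟩ := hclass p hp hflip
      constructor
      · simp only [hφ, if_neg hflip]
        rcases hcls with ⟨h1, _, h2b⟩ | ⟨h2, h1a, _⟩
        · exact fun hq => h2b (congrArg Prod.snd hq)
        · exact fun hq => h1a (congrArg Prod.fst hq)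
      · rw [hmem_t]; simp only [hφ, if_neg hflip]
        exact ⟨((hmem_s p).1 hp).1, hyp⟩
  have hinj : Set.InjOn φ ↑s := by
    intro p hp q hq hpq
    simp only [Finset.mem_coe] at hp hq
    by_cases hfp : σ p.1 < σ p.2 <;> by_cases hfq : σ q.1 < σ q.2
    · simp only [hφ, if_pos hfp, if_pos hfq, Prod.mk.injEq] at hpq
      exact Prod.ext (σ.injective hpq.1) (σ.injective hpq.2)
    · exfalso
      simp only [hφ, if_pos hfp, if_neg hfq] at hpq
      have e1 : σ p.1 = q.1 := congrArg Prod.fst hpq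
      have e2 : σ p.2 = q.2 := congrArg Prod.snd hpq
      apply hfq
      rw [← e1, ← e2]
      simp only [hσ, Equiv.swap_apply_self]
      exact ((hmem_s p).1 hp).1
    · exfalso
      simp only [hφ, if_neg hfp, if_pos hfq] at hpq
      have e1 : σ q.1 = p.1 := (congrArg Prod.fst hpq).symm
      have e2 : σ q.2 = p.2 := (congrArg Prod.snd hpq).symm
      apply hfp
      rw [← e1, ← e2]
      simp only [hσ, Equiv.swap_apply_self]
      exact ((hmem_s q).1 hq).1
    · simp only [hφ, if_neg hfp, if_neg hfq] at hpq; exact hpq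
  calc s.card ≤ (t.erase (a, b)).card := Finset.card_le_card_of_injOn φ hmaps hinj
    _ < t.card := Finset.card_erase_lt_of_mem hab'

/-- if `f ∈ sol^γ_λ` vanishes at the origin then `f = 0`. -/
theorem statement_3 (N : ℕ) (hN : 1 ≤ N) (γ : ℝ) (lam : Fin N → ℂ)
    (f : Fn N) (hf : memSol γ lam f) (h0 : f (fun _ => 0) = 0) :
    ∀ x : Pt N, f x = 0 := by
  classical
  obtain ⟨⟨hfc, hfs⟩, heq⟩ := hf
  -- the linear functional y ↦ -i λ·y, as a continuous linear map
  let cL : Pt N →L[ℝ] ℂ := LinearMap.toContinuousLinearMap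
    { toFun := fun v => -Complex.I * ∑ j, lam j * (v j : ℂ)
      map_add' := by
        intro u v
        simp only [Pi.add_apply, Complex.ofReal_add, mul_add, Finset.sum_add_distrib]
      map_smul' := by
        intro r v
        simp only [Pi.smul_apply, smul_eq_mul, Complex.ofReal_mul, RingHom.id_apply,
          Complex.real_smul, Finset.mul_sum]
        exact Finset.sum_congr rfl fun j _ => by ring }
  have hcL : ∀ v : Pt N, cL v = -Complex.I * ∑ j, lam j * (v j : ℂ) := fun v => rfl
  set g : Pt N → ℂ := fun y => f y * Complex.exp (cL y) with hg
  have hgc : Continuous g := hfc.mul (Complex.continuous_exp.comp cL.continuous)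
  -- main claim on regular points, by induction on inversion number
  have key : ∀ n : ℕ, ∀ x : Pt N, x ∈ regPts N → invNumPt x = n → f x = 0 := by
    intro n
    induction n using Nat.strong_induction_on with
    | _ n IH =>
    intro x hx hxn
    -- the open convex order-cell of x
    set S : Set (Pt N) := {y | ∀ a b : Fin N, x a < x b → y a < y b} with hS
    have hxS : x ∈ S := fun a b h => h
    have hSiff : ∀ y ∈ S, ∀ a b : Fin N, a ≠ b → (y a < y b ↔ x a < x b) := by
      intro y hy a b hab
      constructor
      · intro h
        rcases lt_or_gt_of_ne (hx a b hab) with h' | h'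
        · exact h'
        · exact absurd (hy b a h') (not_lt.2 h.le)
      · exact hy a b
    have hSreg : S ⊆ regPts N := by
      intro y hy a b hab
      rcases lt_or_gt_of_ne (hx a b hab) with h' | h'
      · exact (hy a b h').ne
      · exact (hy b a h').ne'
    have hSopen : IsOpen S := by
      have hrw : S = ⋂ p : Fin N × Fin N, {y : Pt N | x p.1 < x p.2 → y p.1 < y p.2} := by
        ext y
        simp only [hS, Set.mem_setOf_eq, Set.mem_iInter, Prod.forall]
      rw [hrw]
      refine isOpen_iInter_of_finite fun p => ?_
      by_cases hp : x p.1 < x p.2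
      · have : {y : Pt N | x p.1 < x p.2 → y p.1 < y p.2} = {y : Pt N | y p.1 < y p.2} := by
          ext y; simp [hp]
        rw [this]; exact isOpen_lt (continuous_apply p.1) (continuous_apply p.2)
      · have : {y : Pt N | x p.1 < x p.2 → y p.1 < y p.2} = Set.univ := by
          ext y; simp [hp]
        rw [this]; exact isOpen_univ
    have hSconv : Convex ℝ S := by
      intro u hu v hv α β hα hβ hαβ
      intro a b hab
      have h2 : β * v a ≤ β * v b := mul_le_mul_of_nonneg_left (hv a b hab).le hβ
      have h1 : α * u a ≤ α * u b := mul_le_mul_of_nonneg_left (hu a b hab).le hα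
      have hlt : α * u a + β * v a < α * u b + β * v b := by
        rcases hα.lt_or_eq with hα' | hα'
        · have := mul_lt_mul_of_pos_left (hu a b hab) hα'
          linarith
        · have hβ' : 0 < β := by rw [← hα'] at hαβ; linarith
          have := mul_lt_mul_of_pos_left (hv a b hab) hβ'
          linarith
      simpa [Pi.add_apply, Pi.smul_apply, smul_eq_mul] using hlt
    obtain ⟨w, hSw⟩ : ∃ w : Equiv.Perm (Fin N), S ⊆ alcove w := by
      have hxinj : Function.Injective x := by
        intro a b hab'
        by_contra hne
        exact hx a b hne hab'
      set σ := Tuple.sort x with hσdef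
      have hsm : StrictMono (x ∘ σ) :=
        (Tuple.monotone_sort x).strictMono_of_injective (hxinj.comp σ.injective)
      refine ⟨(Fin.revPerm.trans σ)⁻¹, ?_⟩
      intro y hy
      simp only [alcove, posAlcove, permPt, Set.mem_setOf_eq, inv_inv, Equiv.trans_apply,
        Fin.revPerm_apply]
      intro i j hij
      apply hy
      exact hsm (Fin.rev_lt_rev.mpr hij)
    have hdiff : ∀ y ∈ S, DifferentiableAt ℝ f y := by
      intro y hy
      have h1 : DifferentiableOn ℝ f S := ((hfs w).mono hSw).differentiableOn (by simp)
      exact (h1 y hy).differentiableAt (hSopen.mem_nhds hy)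
    have hinv : ∀ y ∈ S, invNumPt y = n := by
      intro y hy
      rw [← hxn]
      unfold invNumPt
      congr 1
      apply Finset.filter_congr
      intro p _
      constructor
      · rintro ⟨h1, h2⟩; exact ⟨h1, (hSiff y hy p.1 p.2 (ne_of_lt h1)).1 h2⟩
      · rintro ⟨h1, h2⟩; exact ⟨h1, hy p.1 p.2 h2⟩
    have hLam : ∀ y ∈ S, ∀ j : Fin N, LambdaOp j f y = 0 := by
      intro y hy j
      have hperm : ∀ k : Fin N, permPt (Equiv.swap j k) y = y ∘ Equiv.swap j k := by
        intro k; funext i; simp [permPt, Equiv.swap_inv]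
      have hregy : ∀ k : Fin N, (y ∘ Equiv.swap j k) ∈ regPts N := by
        intro k a' b' hab' hc
        exact hSreg hy (Equiv.swap j k a') (Equiv.swap j k b')
          (fun hc' => hab' ((Equiv.swap j k).injective hc')) hc
      have h1 : ∀ k ∈ (Finset.univ : Finset (Fin N)),
          (if k < j ∧ y k < y j then f (permPt (Equiv.swap j k) y) else 0) = 0 := by
        intro k _
        split_ifs with h
        · rw [hperm k]
          have hlt : invNumPt (y ∘ Equiv.swap j k) < n := by
            rw [← hinv y hy, Equiv.swap_comm j k]
            exact invNumPt_swap_lt h.1 h.2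
          exact IH _ hlt _ ((Equiv.swap_comm j k) ▸ hregy k) rfl
        · rfl
      have h2 : ∀ k ∈ (Finset.univ : Finset (Fin N)),
          (if j < k ∧ y j < y k then f (permPt (Equiv.swap j k) y) else 0) = 0 := by
        intro k _
        split_ifs with h
        · rw [hperm k]
          have hlt : invNumPt (y ∘ Equiv.swap j k) < n := by
            rw [← hinv y hy]
            exact invNumPt_swap_lt h.1 h.2
          exact IH _ hlt _ (hregy k) rfl
        · rfl
      unfold LambdaOp
      rw [Finset.sum_eq_zero h1, Finset.sum_eq_zero h2, sub_zero]
    have hfd : ∀ y ∈ S, ∀ j : Fin N,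
        fderiv ℝ f y (Pi.single j 1) = Complex.I * lam j * f y := by
      intro y hy j
      have hu : HasDerivAt (fun t : ℝ => Function.update y j t) (Pi.single j 1) (y j) := by
        have e : (fun t : ℝ => Function.update y j t)
            = fun t => y + (t - y j) • (Pi.single j 1 : Pt N) := by
          funext t; funext i
          by_cases hij : i = j
          · subst hij; simp
          · simp [Function.update_apply, hij, Pi.single_apply]
        rw [e]
        have h' := (((hasDerivAt_id (y j)).sub_const (y j)).smul_const
          ((Pi.single j 1 : Pt N))).const_add y
        simpa using h'
      have hfy' : HasFDerivAt f (fderiv ℝ f y) (Function.update y j (y j)) := by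
        rw [Function.update_eq_self]
        exact (hdiff y hy).hasFDerivAt
      have hcomp := hfy'.comp_hasDerivAt (y j) hu
      have hpd : pd j f y = fderiv ℝ f y (Pi.single j 1) := by
        unfold pd
        exact hcomp.deriv
      have heqy := heq j y (hSreg hy)
      rw [hLam y hy j, mul_zero, sub_zero] at heqy
      rw [← hpd]; exact heqy
    have hg0 : ∀ y ∈ S, HasFDerivAt g (0 : Pt N →L[ℝ] ℂ) y := by
      intro y hy
      set E' : Pt N →L[ℝ] ℂ :=
        (((1 : ℂ →L[ℂ] ℂ).smulRight (Complex.exp (cL y))).restrictScalars ℝ).comp cL with hE'def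
      have hE : HasFDerivAt (fun z : Pt N => Complex.exp (cL z)) E' y := by
        have h1 : HasFDerivAt Complex.exp
            ((1 : ℂ →L[ℂ] ℂ).smulRight (Complex.exp (cL y))) (cL y) :=
          (Complex.hasDerivAt_exp (cL y)).hasFDerivAt
        exact (h1.restrictScalars ℝ).comp y (cL.hasFDerivAt)
      have hmul := ((hdiff y hy).hasFDerivAt).mul hE
      have hDf : ∀ v : Pt N, fderiv ℝ f y v
          = Complex.I * (∑ j, lam j * (v j : ℂ)) * f y := by
        intro v
        conv_lhs => rw [← Finset.univ_sum_single v, map_sum]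
        have hsingle : ∀ j : Fin N, (Pi.single j (v j) : Pt N) = (v j) • (Pi.single j 1 : Pt N) := by
          intro j; funext i
          by_cases hij : i = j
          · subst hij; simp
          · simp [Pi.single_apply, hij]
        calc ∑ j, fderiv ℝ f y (Pi.single j (v j))
            = ∑ j, (v j : ℂ) * (Complex.I * lam j * f y) := by
              refine Finset.sum_congr rfl fun j _ => ?_
              rw [hsingle j, ContinuousLinearMap.map_smul, hfd y hy j, Complex.real_smul]
          _ = Complex.I * (∑ j, lam j * (v j : ℂ)) * f y := by
              rw [Finset.mul_sum, Finset.sum_mul]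
              refine Finset.sum_congr rfl fun j _ => by ring
      have hz : f y • E' + Complex.exp (cL y) • fderiv ℝ f y = (0 : Pt N →L[ℝ] ℂ) := by
        apply ContinuousLinearMap.ext
        intro v
        simp only [ContinuousLinearMap.add_apply, ContinuousLinearMap.coe_smul',
          Pi.smul_apply, hE'def, ContinuousLinearMap.coe_comp', Function.comp_apply,
          ContinuousLinearMap.coe_restrictScalars', ContinuousLinearMap.smulRight_apply,
          ContinuousLinearMap.one_apply, ContinuousLinearMap.zero_apply, smul_eq_mul]
        rw [hDf v, hcL v]
        ring
      exact hz ▸ hmul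
    have hconst : ∀ y ∈ S, g y = g x := by
      intro y hy
      have hb := Convex.norm_image_sub_le_of_norm_hasFDerivWithin_le
        (f' := fun _ => (0 : Pt N →L[ℝ] ℂ)) (C := 0)
        (fun z hz => (hg0 z hz).hasFDerivWithinAt)
        (fun z _ => le_of_eq norm_zero) hSconv hxS hy
      rw [zero_mul] at hb
      exact sub_eq_zero.1 (norm_le_zero_iff.1 hb)
    have hgx0 : g x = 0 := by
      have hscale : ∀ t : ℝ, 0 < t → (t • x) ∈ S := by
        intro t ht a b hab
        simp only [Pi.smul_apply, smul_eq_mul]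
        exact mul_lt_mul_of_pos_left hab ht
      have hcont : Filter.Tendsto (fun t : ℝ => g (t • x))
          (nhdsWithin 0 (Set.Ioi 0)) (nhds (g 0)) := by
        have hc2 : Continuous fun t : ℝ => g (t • x) :=
          hgc.comp (continuous_id.smul continuous_const)
        have h0' := hc2.continuousAt (x := (0:ℝ)).tendsto
        simp only [zero_smul] at h0'
        exact h0'.mono_left nhdsWithin_le_nhds
      have heven : ∀ᶠ t in nhdsWithin (0:ℝ) (Set.Ioi (0:ℝ)), g (t • x) = g x := by
        filter_upwards [self_mem_nhdsWithin] with t ht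
        exact hconst _ (hscale t ht)
      have h2 : Filter.Tendsto (fun t : ℝ => g (t • x))
          (nhdsWithin 0 (Set.Ioi 0)) (nhds (g x)) := by
        rw [Filter.tendsto_congr' heven]; exact tendsto_const_nhds
      have h3 : g 0 = g x := tendsto_nhds_unique hcont h2
      rw [← h3]
      show f 0 * Complex.exp (cL 0) = 0
      rw [map_zero, Complex.exp_zero, mul_one]
      exact h0
    have hfx : f x * Complex.exp (cL x) = 0 := hgx0
    rcases mul_eq_zero.1 hfx with h | h
    · exact h
    · exact absurd h (Complex.exp_ne_zero _)
  -- density of regular points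
  have hreg : ∀ x ∈ regPts N, f x = 0 := fun x hx => key _ x hx rfl
  have hdense : Dense (regPts N) := by
    rw [Metric.dense_iff]
    intro x r hr
    set c : Pt N := fun j => (j : ℝ) with hc
    set B : Set ℝ :=
      (fun p : Fin N × Fin N => (x p.1 - x p.2) / ((p.2 : ℝ) - (p.1 : ℝ))) '' Set.univ with hB
    have hBfin : B.Finite := Set.Finite.image _ (Set.finite_univ)
    have hδ : (0:ℝ) < r / (‖c‖ + 1) := by positivity
    obtain ⟨t, ht⟩ : (Set.Ioo (0:ℝ) (r / (‖c‖ + 1)) \ B).Nonempty := by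
      have : (Set.Ioo (0:ℝ) (r / (‖c‖ + 1))).Infinite := Set.Ioo_infinite hδ
      exact (this.diff hBfin).nonempty
    refine ⟨x + t • c, ?_, ?_⟩
    · rw [Metric.mem_ball, dist_comm, dist_self_add_right, norm_smul]
      calc ‖t‖ * ‖c‖ ≤ ‖t‖ * (‖c‖ + 1) := by
            apply mul_le_mul_of_nonneg_left (by linarith) (norm_nonneg t)
        _ < (r / (‖c‖ + 1)) * (‖c‖ + 1) := by
            apply mul_lt_mul_of_pos_right _ (by positivity)
            rw [Real.norm_eq_abs, abs_of_pos ht.1.1]; exact ht.1.2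
        _ = r := by field_simp
    · intro i j hij hcontr
      apply ht.2
      rw [hB]
      refine ⟨(i, j), Set.mem_univ _, ?_⟩
      simp only [Pi.add_apply, Pi.smul_apply, smul_eq_mul, hc] at hcontr
      have hij' : ((i : ℕ) : ℝ) ≠ ((j : ℕ) : ℝ) := by
        exact_mod_cast fun h => hij (Fin.ext h)
      have hne : ((j : ℕ) : ℝ) - ((i : ℕ) : ℝ) ≠ 0 := sub_ne_zero.2 hij'.symm
      field_simp
      linarith [hcontr]
  have : f = fun _ => 0 := Continuous.ext_on hdense hfc continuous_const hreg
  intro x; rw [this]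

end
end

section
/- Fix an integer N ≥ 1, γ ∈ ℝ and λ ∈ ℂ^N, and suppose f ∈ sol^γ_λ. Then f solves the quantum nonlinear Schrödinger eigenvalue problem with eigenvalue E = Σ_{j=1}^N λ_j²; explicitly: (i) −Σ_{j=1}^N (∂_j² f)(x) = (Σ_{j=1}^N λ_j²) f(x) for every x ∈ ℝ^N_reg, and (ii) f satisfies the derivative jump conditions (with coupling γ). -/
open scoped BigOperators
open MeasureTheory Complex

noncomputable section

namespace QNLS6

open Finset

variable {N : ℕ}

/-- Sign coefficient entering `Λ_j`. -/
def eps (j k : Fin N) (x : Pt N) : ℂ :=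
  (if k < j ∧ x k < x j then 1 else 0) - (if j < k ∧ x j < x k then 1 else 0)

lemma eps_self (j : Fin N) (x : Pt N) : eps j j x = 0 := by
  simp [eps]

lemma eps_antisymm (j k : Fin N) (x : Pt N) : eps k j x = - eps j k x := by
  simp only [eps]; ring

lemma lambdaOp_eq (j : Fin N) (f : Fn N) (x : Pt N) :
    LambdaOp j f x = ∑ k, eps j k x * f (permPt (Equiv.swap j k) x) := by
  classical
  unfold LambdaOp eps
  rw [← Finset.sum_sub_distrib]
  refine Finset.sum_congr rfl fun k _ => ?_
  by_cases h1 : k < j ∧ x k < x j <;> by_cases h2 : j < k ∧ x j < x k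
  · exact absurd h2.1 (lt_asymm h1.1)
  · simp [h1, h2]
  · simp [h1, h2]
  · simp [h1, h2]

lemma permPt_swap_apply (j k a : Fin N) (x : Pt N) :
    permPt (Equiv.swap j k) x a = x (Equiv.swap j k a) := by
  simp [permPt]

lemma permPt_swap_left (j k : Fin N) (x : Pt N) :
    permPt (Equiv.swap j k) x j = x k := by
  simp [permPt_swap_apply]

lemma permPt_swap_right (j k : Fin N) (x : Pt N) :
    permPt (Equiv.swap j k) x k = x j := by
  simp [permPt_swap_apply]

lemma permPt_swap_other (j k a : Fin N) (haj : a ≠ j) (hak : a ≠ k) (x : Pt N) :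
    permPt (Equiv.swap j k) x a = x a := by
  rw [permPt_swap_apply, Equiv.swap_apply_of_ne_of_ne haj hak]

lemma permPt_swap_update (j k : Fin N) (x : Pt N) (t : ℝ) :
    permPt (Equiv.swap j k) (Function.update x j t)
      = Function.update (permPt (Equiv.swap j k) x) k t := by
  funext a
  rcases eq_or_ne a k with rfl | hak
  · rw [permPt_swap_right, Function.update_self, Function.update_self]
  · have h : Equiv.swap j k a ≠ j := by
      intro h
      exact hak (by rw [← Equiv.swap_apply_self j k a, h, Equiv.swap_apply_left])
    rw [Function.update_of_ne hak, permPt_swap_apply, permPt_swap_apply,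
      Function.update_of_ne h]

lemma pd_comp_swap (j k : Fin N) (f : Fn N) (x : Pt N) :
    pd j (fun y => f (permPt (Equiv.swap j k) y)) x
      = pd k f (permPt (Equiv.swap j k) x) := by
  unfold pd
  have h1 : (fun t : ℝ => f (permPt (Equiv.swap j k) (Function.update x j t)))
      = fun t : ℝ => f (Function.update (permPt (Equiv.swap j k) x) k t) := by
    funext t; rw [permPt_swap_update]
  rw [h1, permPt_swap_right]

/-- Regularity is permutation invariant. -/
lemma regPts_perm {x : Pt N} (hx : x ∈ regPts N) (w : Equiv.Perm (Fin N)) :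
    permPt w x ∈ regPts N := by
  intro a b hab
  exact hx _ _ (fun h => hab (by simpa using congrArg w h))

/-- The comparison neighborhood of `x`. -/
def cmpNbhd (x : Pt N) : Set (Pt N) := {y | ∀ a b : Fin N, x a < x b → y a < y b}

lemma mem_cmpNbhd_self (x : Pt N) : x ∈ cmpNbhd x := fun _ _ h => h

lemma isOpen_cmpNbhd (x : Pt N) : IsOpen (cmpNbhd x) := by
  have h : cmpNbhd x = ⋂ (a : Fin N) (b : Fin N), {y : Pt N | x a < x b → y a < y b} := by
    ext y; simp [cmpNbhd, Set.mem_iInter]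
  rw [h]
  refine isOpen_iInter_of_finite fun a => isOpen_iInter_of_finite fun b => ?_
  by_cases hab : x a < x b
  · have : {y : Pt N | x a < x b → y a < y b} = {y : Pt N | y a < y b} := by
      ext y; simp [hab]
    rw [this]
    exact isOpen_lt (continuous_apply a) (continuous_apply b)
  · have : {y : Pt N | x a < x b → y a < y b} = Set.univ := by
      ext y; simp [hab]
    rw [this]; exact isOpen_univ

lemma cmpNbhd_subset_reg {x : Pt N} (hx : x ∈ regPts N) : cmpNbhd x ⊆ regPts N := by
  intro y hy a b hab
  rcases (hx a b hab).lt_or_gt with h | h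
  · exact ne_of_lt (hy a b h)
  · exact (ne_of_lt (hy b a h)).symm

lemma eps_eq_on_cmpNbhd {x y : Pt N} (hx : x ∈ regPts N) (hy : y ∈ cmpNbhd x)
    (j k : Fin N) : eps j k y = eps j k x := by
  rcases eq_or_ne j k with rfl | hjk
  · rw [eps_self, eps_self]
  have key : ∀ a b : Fin N, a ≠ b → (y a < y b ↔ x a < x b) := by
    intro a b hab
    constructor
    · intro h
      rcases (hx a b hab).lt_or_gt with h' | h'
      · exact h'
      · exact absurd (hy b a h') (lt_asymm h)
    · exact hy a b
  have e1 : (k < j ∧ y k < y j) ↔ (k < j ∧ x k < x j) :=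
    and_congr_right fun _ => key k j hjk.symm
  have e2 : (j < k ∧ y j < y k) ↔ (j < k ∧ x j < x k) :=
    and_congr_right fun _ => key j k hjk
  unfold eps
  rw [if_congr e1 rfl rfl, if_congr e2 rfl rfl]

lemma cmpNbhd_subset_alcove (x : Pt N) (hx : x ∈ regPts N) :
    ∃ w : Equiv.Perm (Fin N), cmpNbhd x ⊆ alcove w := by
  classical
  set σ := Tuple.sort x with hσ
  refine ⟨(Fin.revPerm.trans σ)⁻¹, fun y hy => ?_⟩
  intro i j hij
  have hq : ∀ a : Fin N, permPt (Fin.revPerm.trans σ)⁻¹ y a = y (σ (Fin.rev a)) := by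
    intro a; simp [permPt]
  rw [hq, hq]
  apply hy
  have hmono := Tuple.monotone_sort x
  have h1 : Fin.rev j < Fin.rev i := by
    rw [Fin.rev_lt_rev]; exact hij
  have h2 : x (σ (Fin.rev j)) ≤ x (σ (Fin.rev i)) := hmono h1.le
  rcases h2.lt_or_eq with h | h
  · exact h
  · exact absurd h (hx _ _ fun hc => h1.ne (σ.injective hc))

end QNLS6
namespace QNLS6

variable {N : ℕ}

lemma diffAt_of_reg {f : Fn N} (hf : CBsmooth f) {x : Pt N} (hx : x ∈ regPts N) :
    DifferentiableAt ℝ f x := by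
  obtain ⟨w, hw⟩ := cmpNbhd_subset_alcove x hx
  have hsm : ContDiffOn ℝ (⊤ : ℕ∞) f (cmpNbhd x) := (hf.2 w).mono hw
  exact (hsm.contDiffAt ((isOpen_cmpNbhd x).mem_nhds (mem_cmpNbhd_self x))).differentiableAt
    (by simp)

lemma hasDerivAt_slice {f : Fn N} (hf : CBsmooth f) {z : Pt N} (hz : z ∈ regPts N)
    (k : Fin N) :
    HasDerivAt (fun t : ℝ => f (Function.update z k t)) (pd k f z) (z k) := by
  have h2 := (hasDerivAt_update z k (z k)).differentiableAt
  have h' : DifferentiableAt ℝ f (Function.update z k (z k)) := by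
    rw [Function.update_eq_self]; exact diffAt_of_reg hf hz
  have h3 : DifferentiableAt ℝ (fun t : ℝ => f (Function.update z k t)) (z k) :=
    DifferentiableAt.comp (z k) h' h2
  exact h3.hasDerivAt

/-- Master derivative computation:
`∂_j∂_j f(x) = iλ_j ∂_j f(x) + γ ∑_k ε_{jk}(x) (∂_k f)(s_{jk} x)` at regular `x`. -/
lemma pd_pd_eq (γ : ℝ) (lam : Fin N → ℂ) (f : Fn N) (hf : memSol γ lam f)
    (x : Pt N) (hx : x ∈ regPts N) (j : Fin N) :
    pd j (pd j f) x = Complex.I * lam j * pd j f x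
      + (γ : ℂ) * ∑ k, eps j k x * pd k f (permPt (Equiv.swap j k) x) := by
  classical
  have hloc : ∀ y ∈ cmpNbhd x, pd j f y
      = Complex.I * lam j * f y
        + (γ : ℂ) * ∑ k, eps j k x * f (permPt (Equiv.swap j k) y) := by
    intro y hy
    have hyr : y ∈ regPts N := cmpNbhd_subset_reg hx hy
    have heq := hf.2 j y hyr
    have h : pd j f y = Complex.I * lam j * f y + (γ : ℂ) * LambdaOp j f y := by
      linear_combination heq
    rw [h, lambdaOp_eq]
    congr 2
    exact Finset.sum_congr rfl fun k _ => by rw [eps_eq_on_cmpNbhd hx hy]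
  set G : ℝ → ℂ := fun t =>
    Complex.I * lam j * f (Function.update x j t)
      + (γ : ℂ) * ∑ k, eps j k x * f (Function.update (permPt (Equiv.swap j k) x) k t)
    with hG
  have hucont : Continuous (fun t : ℝ => Function.update x j t) :=
    continuous_const.update j continuous_id
  have hev : (fun t : ℝ => pd j f (Function.update x j t)) =ᶠ[nhds (x j)] G := by
    have hmem : (fun t : ℝ => Function.update x j t) ⁻¹' cmpNbhd x ∈ nhds (x j) := by
      apply (isOpen_cmpNbhd x).preimage hucont |>.mem_nhds
      simp only [Set.mem_preimage, Function.update_eq_self]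
      exact mem_cmpNbhd_self x
    filter_upwards [hmem] with t ht
    rw [hloc _ ht, hG]
    simp only
    congr 2
    refine Finset.sum_congr rfl fun k _ => ?_
    rw [permPt_swap_update]
  -- derivative of G
  have h1 : HasDerivAt (fun t : ℝ => f (Function.update x j t)) (pd j f x) (x j) :=
    hasDerivAt_slice hf.1 hx j
  have h2 : ∀ k : Fin N,
      HasDerivAt (fun t : ℝ => f (Function.update (permPt (Equiv.swap j k) x) k t))
        (pd k f (permPt (Equiv.swap j k) x)) (x j) := by
    intro k
    have hzreg : permPt (Equiv.swap j k) x ∈ regPts N := regPts_perm hx _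
    have h := hasDerivAt_slice hf.1 hzreg k
    rwa [permPt_swap_right] at h
  have hGd : HasDerivAt G
      (Complex.I * lam j * pd j f x
        + (γ : ℂ) * ∑ k, eps j k x * pd k f (permPt (Equiv.swap j k) x)) (x j) := by
    refine HasDerivAt.add (h1.const_mul _) (HasDerivAt.const_mul _ ?_)
    exact HasDerivAt.fun_sum fun k _ => (h2 k).const_mul _
  have : pd j (pd j f) x = deriv G (x j) := by
    unfold pd
    exact Filter.EventuallyEq.deriv_eq hev
  rw [this, hGd.deriv]

end QNLS6
namespace QNLS6

variable {N : ℕ}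

lemma eps_mul_eps_swap (a b : Fin N) (x : Pt N) :
    eps a b x * eps b a (permPt (Equiv.swap a b) x) = 0 := by
  rcases eq_or_ne a b with rfl | hab
  · rw [eps_self]; ring
  have h1 : permPt (Equiv.swap a b) x a = x b := permPt_swap_left a b x
  have h2 : permPt (Equiv.swap a b) x b = x a := permPt_swap_right a b x
  unfold eps
  rw [h1, h2]
  rcases hab.lt_or_gt with h | h <;> rcases lt_trichotomy (x a) (x b) with hv | hv | hv <;>
    first
      | simp [h, hv, lt_asymm h, lt_asymm hv]
      | simp [h, hv, lt_asymm h]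

/-- The coefficient in the triple sum. -/
def cC (x : Pt N) (a b c : Fin N) : ℂ := eps a b x * eps b c (permPt (Equiv.swap a b) x)

lemma cC_expand (x : Pt N) (a b c : Fin N) (hab : a ≠ b) (hca : c ≠ a) (hcb : c ≠ b) :
    cC x a b c = ((if b < a ∧ x b < x a then (1:ℂ) else 0)
        - (if a < b ∧ x a < x b then 1 else 0)) *
      ((if c < b ∧ x c < x a then (1:ℂ) else 0) - (if b < c ∧ x a < x c then 1 else 0)) := by
  unfold cC eps
  rw [permPt_swap_right, permPt_swap_other a b c hca hcb]

lemma cyc_sum (x : Pt N) (hx : x ∈ regPts N) (j k m : Fin N) :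
    cC x j k m + cC x m j k + cC x k m j = 0 := by
  by_cases hjk : j = k
  · subst hjk
    have h1 : cC x j j m = 0 := by unfold cC; rw [eps_self]; ring
    have h2 : cC x m j j = 0 := by unfold cC; rw [eps_self]; ring
    have h3 : cC x j m j = 0 := eps_mul_eps_swap j m x
    rw [h1, h2, h3]; ring
  by_cases hjm : j = m
  · subst hjm
    have h1 : cC x j k j = 0 := eps_mul_eps_swap j k x
    have h2 : cC x j j k = 0 := by unfold cC; rw [eps_self]; ring
    have h3 : cC x k j j = 0 := by unfold cC; rw [eps_self]; ring
    rw [h1, h2, h3]; ring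
  by_cases hkm : k = m
  · subst hkm
    have h1 : cC x j k k = 0 := by unfold cC; rw [eps_self]; ring
    have h2 : cC x k j k = 0 := eps_mul_eps_swap k j x
    have h3 : cC x k k j = 0 := by unfold cC; rw [eps_self]; ring
    rw [h1, h2, h3]; ring
  -- distinct indices
  have hjk' : j ≠ k := hjk
  have hjm' : j ≠ m := hjm
  have hkm' : k ≠ m := hkm
  clear hjk hjm hkm
  have hjk := hjk'; have hjm := hjm'; have hkm := hkm'
  have w1 : x j ≠ x k := hx j k hjk
  have w2 : x j ≠ x m := hx j m hjm
  have w3 : x k ≠ x m := hx k m hkm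
  rw [cC_expand x j k m hjk hjm.symm hkm.symm,
      cC_expand x m j k hjm.symm hkm hjk.symm,
      cC_expand x k m j hkm hjk hjm]
  rcases hjk.lt_or_gt with h1 | h1 <;>
  rcases hjm.lt_or_gt with h2 | h2 <;>
  rcases hkm.lt_or_gt with h3 | h3 <;>
  rcases w1.lt_or_gt with v1 | v1 <;>
  rcases w2.lt_or_gt with v2 | v2 <;>
  rcases w3.lt_or_gt with v3 | v3 <;>
  first
    | omega
    | linarith
    | (simp only [h1, h2, h3, v1, v2, v3, lt_asymm h1, lt_asymm h2, lt_asymm h3,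
        lt_asymm v1, lt_asymm v2, lt_asymm v3, and_true, true_and, and_false, false_and,
        if_true, if_false, and_self]; norm_num)

end QNLS6
namespace QNLS6

variable {N : ℕ}

def Zpt (x : Pt N) (j k m : Fin N) : Pt N :=
  permPt (Equiv.swap k m) (permPt (Equiv.swap j k) x)

lemma Z_rho (x : Pt N) {a b c : Fin N} (hab : a ≠ b) (hac : a ≠ c) (hbc : b ≠ c) :
    Zpt x c a b = Zpt x a b c := by
  funext d
  unfold Zpt
  rw [permPt_swap_apply, permPt_swap_apply, permPt_swap_apply, permPt_swap_apply]
  congr 1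
  by_cases hda : d = a
  · subst hda
    simp [Equiv.swap_apply_def, hab, hac, hbc, Ne.symm hab, Ne.symm hac, Ne.symm hbc]
  by_cases hdb : d = b
  · subst hdb
    simp [Equiv.swap_apply_def, hab, hac, hbc, Ne.symm hab, Ne.symm hac, Ne.symm hbc]
  by_cases hdc : d = c
  · subst hdc
    simp [Equiv.swap_apply_def, hab, hac, hbc, Ne.symm hab, Ne.symm hac, Ne.symm hbc]
  · simp [Equiv.swap_apply_def, hda, hdb, hdc]

lemma cC_deg_left (x : Pt N) (a c : Fin N) : cC x a a c = 0 := by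
  unfold cC; rw [eps_self]; ring

lemma cC_deg_mid (x : Pt N) (a b : Fin N) : cC x a b b = 0 := by
  unfold cC; rw [eps_self]; ring

lemma cC_deg (x : Pt N) (j k m : Fin N) (h : ¬(j ≠ k ∧ j ≠ m ∧ k ≠ m)) : cC x j k m = 0 := by
  push_neg at h
  by_cases h1 : j = k
  · subst h1; exact cC_deg_left x j m
  by_cases h2 : j = m
  · subst h2; exact eps_mul_eps_swap j k x
  · rw [(h h1 h2 : k = m)]; exact cC_deg_mid x j m

lemma AB_zero (x : Pt N) (f : Fn N) (lam : Fin N → ℂ) :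
    ∑ j : Fin N, ∑ k : Fin N,
      (Complex.I * lam j + Complex.I * lam k) * (eps j k x * f (permPt (Equiv.swap j k) x))
      = 0 := by
  set g : Fin N → Fin N → ℂ := fun j k =>
    (Complex.I * lam j + Complex.I * lam k) * (eps j k x * f (permPt (Equiv.swap j k) x))
    with hg
  have h2 : ∀ j k, g j k = - g k j := by
    intro j k
    simp only [hg]
    rw [eps_antisymm, Equiv.swap_comm j k]
    ring
  have h3 : ∑ j : Fin N, ∑ k : Fin N, g j k = - ∑ j : Fin N, ∑ k : Fin N, g j k := by
    nth_rewrite 1 [Finset.sum_comm]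
    rw [show (∑ k : Fin N, ∑ j : Fin N, g j k) = ∑ k : Fin N, ∑ j : Fin N, -(g k j) from
      Finset.sum_congr rfl fun k _ => Finset.sum_congr rfl fun j _ => h2 j k]
    simp
  linear_combination h3 / 2

lemma rot_sum (G : Fin N → Fin N → Fin N → ℂ) :
    (∑ j : Fin N, ∑ k : Fin N, ∑ m : Fin N, G m j k)
      = ∑ j : Fin N, ∑ k : Fin N, ∑ m : Fin N, G j k m := by
  rw [show (∑ j : Fin N, ∑ k : Fin N, ∑ m : Fin N, G m j k)
      = ∑ j : Fin N, ∑ m : Fin N, ∑ k : Fin N, G m j k from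
    Finset.sum_congr rfl fun j _ => Finset.sum_comm]
  exact Finset.sum_comm

lemma C_zero (x : Pt N) (hx : x ∈ regPts N) (f : Fn N) :
    ∑ j : Fin N, ∑ k : Fin N, ∑ m : Fin N, cC x j k m * f (Zpt x j k m) = 0 := by
  set H : Fin N → Fin N → Fin N → ℂ := fun a b c => cC x a b c * f (Zpt x a b c) with hH
  set S := ∑ j : Fin N, ∑ k : Fin N, ∑ m : Fin N, H j k m with hS
  have h1 : ∑ j : Fin N, ∑ k : Fin N, ∑ m : Fin N, cC x m j k * f (Zpt x j k m) = S := by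
    rw [show (∑ j : Fin N, ∑ k : Fin N, ∑ m : Fin N, cC x m j k * f (Zpt x j k m))
        = ∑ j : Fin N, ∑ k : Fin N, ∑ m : Fin N, H m j k from
      Finset.sum_congr rfl fun j _ => Finset.sum_congr rfl fun k _ =>
        Finset.sum_congr rfl fun m _ => by
          by_cases hd : j ≠ k ∧ j ≠ m ∧ k ≠ m
          · simp only [hH]
            rw [Z_rho x hd.1 hd.2.1 hd.2.2]
          · have hz : cC x m j k = 0 := cC_deg x m j k (by tauto)
            simp only [hH, hz, zero_mul]]
    exact rot_sum H
  have h2 : ∑ j : Fin N, ∑ k : Fin N, ∑ m : Fin N, cC x k m j * f (Zpt x j k m) = S := by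
    rw [show (∑ j : Fin N, ∑ k : Fin N, ∑ m : Fin N, cC x k m j * f (Zpt x j k m))
        = ∑ j : Fin N, ∑ k : Fin N, ∑ m : Fin N, H k m j from
      Finset.sum_congr rfl fun j _ => Finset.sum_congr rfl fun k _ =>
        Finset.sum_congr rfl fun m _ => by
          by_cases hd : j ≠ k ∧ j ≠ m ∧ k ≠ m
          · have hZ : Zpt x k m j = Zpt x j k m := by
              rw [Z_rho x hd.2.1.symm hd.2.2.symm hd.1, Z_rho x hd.1 hd.2.1 hd.2.2]
            simp only [hH]
            rw [hZ]
          · have hz : cC x k m j = 0 := cC_deg x k m j (by tauto)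
            simp only [hH, hz, zero_mul]]
    -- ∑ H k m j = ∑ H m j k = ∑ H j k m
    have r1 := rot_sum (fun a b c => H c a b)
    have r2 := rot_sum H
    calc ∑ j : Fin N, ∑ k : Fin N, ∑ m : Fin N, H k m j
        = ∑ j : Fin N, ∑ k : Fin N, ∑ m : Fin N, H m j k := r1
      _ = S := rot_sum H
  have hzero : ∑ j : Fin N, ∑ k : Fin N, ∑ m : Fin N,
      ((cC x j k m + cC x m j k + cC x k m j) * f (Zpt x j k m)) = 0 := by
    refine Finset.sum_eq_zero fun j _ => Finset.sum_eq_zero fun k _ =>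
      Finset.sum_eq_zero fun m _ => ?_
    rw [cyc_sum x hx j k m, zero_mul]
  have hsplit : ∑ j : Fin N, ∑ k : Fin N, ∑ m : Fin N,
      ((cC x j k m + cC x m j k + cC x k m j) * f (Zpt x j k m)) = S + S + S := by
    simp only [add_mul, Finset.sum_add_distrib]
    rw [h1, h2]
  rw [hsplit] at hzero
  linear_combination hzero / 3

end QNLS6
namespace QNLS6

variable {N : ℕ}

lemma eigen_expand (γ : ℝ) (lam : Fin N → ℂ) (f : Fn N) (hf : memSol γ lam f) :
    ∀ (a : Fin N) (y : Pt N), y ∈ regPts N →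
      pd a f y = Complex.I * lam a * f y
        + (γ : ℂ) * ∑ m, eps a m y * f (permPt (Equiv.swap a m) y) := by
  intro a y hy
  have h := hf.2 a y hy
  rw [lambdaOp_eq] at h
  linear_combination h

lemma helmholtz (γ : ℝ) (lam : Fin N → ℂ) (f : Fn N) (hf : memSol γ lam f) :
    ∀ x ∈ regPts N, -(∑ j : Fin N, pd j (pd j f) x) = (∑ j : Fin N, (lam j) ^ 2) * f x := by
  intro x hx
  have e1 := eigen_expand γ lam f hf
  -- expand each second derivative
  have expand : ∀ j : Fin N, pd j (pd j f) x
      = Complex.I * lam j * (Complex.I * lam j * f x)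
        + ∑ k : Fin N,
          ((γ : ℂ) * ((Complex.I * lam j + Complex.I * lam k)
              * (eps j k x * f (permPt (Equiv.swap j k) x)))
            + (γ : ℂ) ^ 2 * ∑ m : Fin N, cC x j k m * f (Zpt x j k m)) := by
    intro j
    rw [pd_pd_eq γ lam f hf x hx j, e1 j x hx]
    rw [show (∑ k : Fin N, eps j k x * pd k f (permPt (Equiv.swap j k) x))
        = ∑ k : Fin N, eps j k x * (Complex.I * lam k * f (permPt (Equiv.swap j k) x)
            + (γ : ℂ) * ∑ m, eps k m (permPt (Equiv.swap j k) x) * f (Zpt x j k m)) from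
      Finset.sum_congr rfl fun k _ => by
        rw [e1 k _ (regPts_perm hx _)]; rfl]
    have hM : ∀ k : Fin N, (∑ m : Fin N, cC x j k m * f (Zpt x j k m))
        = eps j k x * ∑ m, eps k m (permPt (Equiv.swap j k) x) * f (Zpt x j k m) := by
      intro k
      rw [Finset.mul_sum]
      exact Finset.sum_congr rfl fun m _ => by unfold cC; ring
    simp only [hM]
    rw [mul_add, add_assoc, Finset.mul_sum, Finset.mul_sum, Finset.mul_sum, ← Finset.sum_add_distrib]
    congr 1
    exact Finset.sum_congr rfl fun k _ => by ring
  have hsum : ∑ j : Fin N, pd j (pd j f) x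
      = ∑ j : Fin N, Complex.I * lam j * (Complex.I * lam j * f x)
        + ((γ : ℂ) * ∑ j : Fin N, ∑ k : Fin N,
            ((Complex.I * lam j + Complex.I * lam k)
              * (eps j k x * f (permPt (Equiv.swap j k) x)))
          + (γ : ℂ) ^ 2 * ∑ j : Fin N, ∑ k : Fin N, ∑ m : Fin N,
              cC x j k m * f (Zpt x j k m)) := by
    rw [show (∑ j : Fin N, pd j (pd j f) x) = ∑ j : Fin N,
        (Complex.I * lam j * (Complex.I * lam j * f x)
          + ∑ k : Fin N,
            ((γ : ℂ) * ((Complex.I * lam j + Complex.I * lam k)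
                * (eps j k x * f (permPt (Equiv.swap j k) x)))
              + (γ : ℂ) ^ 2 * ∑ m : Fin N, cC x j k m * f (Zpt x j k m))) from
      Finset.sum_congr rfl fun j _ => expand j]
    simp only [Finset.sum_add_distrib, Finset.mul_sum]
  rw [hsum, AB_zero x f lam, C_zero x hx f, mul_zero, mul_zero, add_zero, add_zero]
  have : ∑ j : Fin N, Complex.I * lam j * (Complex.I * lam j * f x)
      = -((∑ j : Fin N, (lam j) ^ 2) * f x) := by
    rw [Finset.sum_mul, ← Finset.sum_neg_distrib]
    exact Finset.sum_congr rfl fun j _ => by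
      linear_combination (lam j ^ 2 * f x) * Complex.I_sq
  rw [this, neg_neg]

end QNLS6
namespace QNLS6

variable {N : ℕ}

lemma jumpShift_apply {j k : Fin N} (hjk : j ≠ k) (δ : ℝ) (x : Pt N) (a : Fin N) :
    jumpShift j k δ x a = if a = k then x k - δ else if a = j then x j + δ else x a := by
  unfold jumpShift
  rcases eq_or_ne a k with rfl | hak
  · rw [Function.update_self, if_pos rfl]
  rcases eq_or_ne a j with rfl | haj
  · rw [Function.update_of_ne hak, Function.update_self, if_neg hak, if_pos rfl]
  · rw [Function.update_of_ne hak, Function.update_of_ne haj, if_neg hak, if_neg haj]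

lemma jumpShift_j {j k : Fin N} (hjk : j ≠ k) (δ : ℝ) (x : Pt N) :
    jumpShift j k δ x j = x j + δ := by
  rw [jumpShift_apply hjk, if_neg hjk, if_pos rfl]

lemma jumpShift_k {j k : Fin N} (hjk : j ≠ k) (δ : ℝ) (x : Pt N) :
    jumpShift j k δ x k = x k - δ := by
  rw [jumpShift_apply hjk, if_pos rfl]

lemma jumpShift_other {j k : Fin N} (hjk : j ≠ k) (δ : ℝ) (x : Pt N) (a : Fin N)
    (haj : a ≠ j) (hak : a ≠ k) : jumpShift j k δ x a = x a := by
  rw [jumpShift_apply hjk, if_neg hak, if_neg haj]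

lemma continuous_jumpShift (j k : Fin N) (hjk : j ≠ k) (x : Pt N) :
    Continuous (fun δ : ℝ => jumpShift j k δ x) := by
  apply continuous_pi
  intro a
  have h : (fun δ : ℝ => jumpShift j k δ x a)
      = fun δ : ℝ => if a = k then x k - δ else if a = j then x j + δ else x a := by
    funext δ; rw [jumpShift_apply hjk]
  rw [h]
  split_ifs
  · exact continuous_const.sub continuous_id
  · exact continuous_const.add continuous_id
  · exact continuous_const

lemma jumpShift_zero {j k : Fin N} (hjk : j ≠ k) (x : Pt N) : jumpShift j k 0 x = x := by
  funext a
  rw [jumpShift_apply hjk]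
  split_ifs with h1 h2
  · rw [h1]; ring
  · rw [h2]; ring
  · rfl

lemma continuous_permPt (w : Equiv.Perm (Fin N)) : Continuous (permPt w) :=
  continuous_pi fun _ => continuous_apply _

lemma permPt_swap_wall {j k : Fin N} (x : Pt N) (hwall : x j = x k) :
    permPt (Equiv.swap j k) x = x := by
  funext a
  rw [permPt_swap_apply]
  rcases eq_or_ne a j with rfl | haj
  · rw [Equiv.swap_apply_left, ← hwall]
  rcases eq_or_ne a k with rfl | hak
  · rw [Equiv.swap_apply_right, hwall]
  · rw [Equiv.swap_apply_of_ne_of_ne haj hak]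

end QNLS6
namespace QNLS6

variable {N : ℕ}

lemma cmp1 {u v d : ℝ} (h : |d| < |u - v|) : u < v + d ↔ u < v := by
  rcases lt_trichotomy u v with c | c | c
  · rw [abs_of_neg (by linarith : u - v < 0)] at h
    have h' := abs_lt.1 h
    constructor <;> intro <;> linarith [h'.1, h'.2]
  · exfalso; rw [c, sub_self, abs_zero] at h; linarith [abs_nonneg d]
  · rw [abs_of_pos (by linarith : 0 < u - v)] at h
    have h' := abs_lt.1 h
    constructor <;> intro <;> linarith [h'.1, h'.2]

lemma cmp2 {u v d : ℝ} (h : |d| < |u - v|) : v + d < u ↔ v < u := by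
  rcases lt_trichotomy u v with c | c | c
  · rw [abs_of_neg (by linarith : u - v < 0)] at h
    have h' := abs_lt.1 h
    constructor <;> intro <;> linarith [h'.1, h'.2]
  · exfalso; rw [c, sub_self, abs_zero] at h; linarith [abs_nonneg d]
  · rw [abs_of_pos (by linarith : 0 < u - v)] at h
    have h' := abs_lt.1 h
    constructor <;> intro <;> linarith [h'.1, h'.2]

section Shift

variable {j k : Fin N} {x : Pt N} {δ : ℝ}

/-- Regularity of the shifted point (any nonzero `δ` obeying the gap bound). -/
lemma reg_shift (hjk : j ≠ k) (hwall : x j = x k) (hδ : δ ≠ 0)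
    (hb : ∀ a : Fin N, a ≠ j → a ≠ k → |δ| < |x a - x j|)
    (hne : ∀ a b : Fin N, a ≠ b → a ≠ j ∨ b ≠ k → b ≠ j ∨ a ≠ k → x a ≠ x b) :
    jumpShift j k δ x ∈ regPts N := by
  intro a b hab
  rcases eq_or_ne j a with rfl | haj
  · rcases eq_or_ne k b with rfl | hbk
    · rw [jumpShift_j hjk, jumpShift_k hjk, ← hwall]
      intro h; exact hδ (by linarith)
    · rw [jumpShift_j hjk, jumpShift_other hjk δ x b hab.symm hbk.symm]
      intro h
      have hbnd := hb b hab.symm hbk.symm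
      rw [show x b - x j = δ from by linarith] at hbnd
      exact lt_irrefl _ hbnd
  rcases eq_or_ne k a with rfl | hak
  · rcases eq_or_ne j b with rfl | hbj
    · rw [jumpShift_k hjk, jumpShift_j hjk, ← hwall]
      intro h; exact hδ (by linarith)
    · rw [jumpShift_k hjk, jumpShift_other hjk δ x b hbj.symm hab.symm, ← hwall]
      intro h
      have hbnd := hb b hbj.symm hab.symm
      rw [show x b - x j = -δ from by linarith, abs_neg] at hbnd
      exact lt_irrefl _ hbnd
  rcases eq_or_ne j b with rfl | hbj
  · rw [jumpShift_other hjk δ x a haj.symm hak.symm, jumpShift_j hjk]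
    intro h
    have hbnd := hb a haj.symm hak.symm
    rw [show x a - x j = δ from by linarith] at hbnd
    exact lt_irrefl _ hbnd
  rcases eq_or_ne k b with rfl | hbk
  · rw [jumpShift_other hjk δ x a haj.symm hak.symm, jumpShift_k hjk, ← hwall]
    intro h
    have hbnd := hb a haj.symm hak.symm
    rw [show x a - x j = -δ from by linarith, abs_neg] at hbnd
    exact lt_irrefl _ hbnd
  · rw [jumpShift_other hjk δ x a haj.symm hak.symm,
      jumpShift_other hjk δ x b hbj.symm hbk.symm]
    exact hne a b hab (Or.inl haj.symm) (Or.inl hbj.symm)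

lemma eps_shift_jp (hjk : j < k) (hwall : x j = x k) (hδ : 0 < δ)
    (hb : ∀ a : Fin N, a ≠ j → a ≠ k → |δ| < |x a - x j|) (b : Fin N) :
    eps j b (jumpShift j k δ x) = if b = j ∨ b = k then 0 else eps j b x := by
  have hjkne : j ≠ k := ne_of_lt hjk
  rcases eq_or_ne b j with rfl | hbj
  · rw [eps_self, if_pos (Or.inl rfl)]
  rcases eq_or_ne b k with rfl | hbk
  · rw [if_pos (Or.inr rfl)]
    unfold eps
    rw [jumpShift_j hjkne, jumpShift_k hjkne,
      if_neg (fun h => absurd h.1 (lt_asymm hjk)),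
      if_neg (fun h => by rw [← hwall] at h; linarith [h.2])]
    ring
  · rw [if_neg (by tauto)]
    unfold eps
    rw [jumpShift_j hjkne, jumpShift_other hjkne δ x b hbj hbk]
    have hbnd := hb b hbj hbk
    rw [if_congr (and_congr_right fun _ => cmp1 hbnd) rfl rfl,
      if_congr (and_congr_right fun _ => cmp2 hbnd) rfl rfl]

lemma eps_shift_kp (hjk : j < k) (hwall : x j = x k) (hδ : 0 < δ)
    (hb : ∀ a : Fin N, a ≠ j → a ≠ k → |δ| < |x a - x j|) (b : Fin N) :
    eps k b (jumpShift j k δ x) = if b = j ∨ b = k then 0 else eps k b x := by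
  have hjkne : j ≠ k := ne_of_lt hjk
  rcases eq_or_ne b k with rfl | hbk
  · rw [eps_self, if_pos (Or.inr rfl)]
  rcases eq_or_ne b j with rfl | hbj
  · rw [if_pos (Or.inl rfl)]
    unfold eps
    rw [jumpShift_j hjkne, jumpShift_k hjkne,
      if_neg (fun h => by rw [← hwall] at h; linarith [h.2]),
      if_neg (fun h => absurd h.1 (lt_asymm hjk))]
    ring
  · rw [if_neg (by tauto)]
    unfold eps
    rw [jumpShift_k hjkne, jumpShift_other hjkne δ x b hbj hbk]
    have hbnd : |(-δ)| < |x b - x k| := by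
      rw [abs_neg, ← hwall]; exact hb b hbj hbk
    have e1 : x b < x k - δ ↔ x b < x k := by
      rw [sub_eq_add_neg]; exact cmp1 hbnd
    have e2 : x k - δ < x b ↔ x k < x b := by
      rw [sub_eq_add_neg]; exact cmp2 hbnd
    rw [if_congr (and_congr_right fun _ => e1) rfl rfl,
      if_congr (and_congr_right fun _ => e2) rfl rfl]

lemma eps_shift_jm (hjk : j < k) (hwall : x j = x k) (hδ : 0 < δ)
    (hb : ∀ a : Fin N, a ≠ j → a ≠ k → |δ| < |x a - x j|) (b : Fin N) :
    eps j b (jumpShift j k (-δ) x)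
      = if b = k then -1 else if b = j then 0 else eps j b x := by
  have hjkne : j ≠ k := ne_of_lt hjk
  rcases eq_or_ne b k with rfl | hbk
  · rw [if_pos rfl]
    unfold eps
    rw [jumpShift_j hjkne, jumpShift_k hjkne,
      if_neg (fun h => absurd h.1 (lt_asymm hjk)),
      if_pos ⟨hjk, by rw [← hwall]; linarith⟩]
    ring
  rcases eq_or_ne b j with rfl | hbj
  · rw [if_neg hbk, if_pos rfl, eps_self]
  · rw [if_neg hbk, if_neg hbj]
    unfold eps
    rw [jumpShift_j hjkne, jumpShift_other hjkne (-δ) x b hbj hbk]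
    have hbnd : |(-δ)| < |x b - x j| := by rw [abs_neg]; exact hb b hbj hbk
    rw [if_congr (and_congr_right fun _ => cmp1 hbnd) rfl rfl,
      if_congr (and_congr_right fun _ => cmp2 hbnd) rfl rfl]

lemma eps_shift_km (hjk : j < k) (hwall : x j = x k) (hδ : 0 < δ)
    (hb : ∀ a : Fin N, a ≠ j → a ≠ k → |δ| < |x a - x j|) (b : Fin N) :
    eps k b (jumpShift j k (-δ) x)
      = if b = j then 1 else if b = k then 0 else eps k b x := by
  have hjkne : j ≠ k := ne_of_lt hjk
  rcases eq_or_ne b j with rfl | hbj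
  · rw [if_pos rfl]
    unfold eps
    rw [jumpShift_j hjkne, jumpShift_k hjkne,
      if_pos ⟨hjk, by rw [← hwall]; linarith⟩,
      if_neg (fun h => absurd h.1 (lt_asymm hjk))]
    ring
  rcases eq_or_ne b k with rfl | hbk
  · rw [if_neg hbj, if_pos rfl, eps_self]
  · rw [if_neg hbj, if_neg hbk]
    unfold eps
    rw [jumpShift_k hjkne, jumpShift_other hjkne (-δ) x b hbj hbk]
    have hbnd : |(-(-δ))| < |x b - x k| := by
      rw [neg_neg, ← hwall]; exact hb b hbj hbk
    have e1 : x b < x k - -δ ↔ x b < x k := by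
      rw [sub_eq_add_neg]; exact cmp1 hbnd
    have e2 : x k - -δ < x b ↔ x k < x b := by
      rw [sub_eq_add_neg]; exact cmp2 hbnd
    rw [if_congr (and_congr_right fun _ => e1) rfl rfl,
      if_congr (and_congr_right fun _ => e2) rfl rfl]

end Shift

end QNLS6
namespace QNLS6

open Filter

variable {N : ℕ}

lemma jump (γ : ℝ) (lam : Fin N → ℂ) (f : Fn N) (hf : memSol γ lam f) :
    SatisfiesJump γ f := by
  intro j k hjk x hwall hsub
  have hjkne : j ≠ k := ne_of_lt hjk
  have hne : ∀ a b : Fin N, a ≠ b → a ≠ j ∨ b ≠ k → b ≠ j ∨ a ≠ k → x a ≠ x b := by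
    intro a b hab h1 h2
    rcases hab.lt_or_gt with h | h
    · exact hsub a b h (by tauto)
    · exact (hsub b a h (by tauto)).symm
  set p : ℝ → Pt N := fun δ => jumpShift j k δ x with hp
  set q : ℝ → Pt N := fun δ => jumpShift j k (-δ) x with hq
  -- eventual gap bound
  have hb : ∀ᶠ δ in nhdsWithin (0:ℝ) (Set.Ioi 0), ∀ a : Fin N, a ≠ j → a ≠ k →
      |δ| < |x a - x j| := by
    rw [Filter.eventually_all]
    intro a
    by_cases ha : a ≠ j ∧ a ≠ k
    · have hxa : x a ≠ x j := hne a j ha.1 (Or.inl ha.1) (Or.inr ha.2)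
      have hpos : 0 < |x a - x j| := abs_pos.2 (sub_ne_zero.2 hxa)
      have habs : Tendsto (fun δ : ℝ => |δ|) (nhdsWithin (0:ℝ) (Set.Ioi 0)) (nhds 0) := by
        have h0 : Tendsto (fun δ : ℝ => |δ|) (nhds (0:ℝ)) (nhds |0|) :=
          continuous_abs.tendsto 0
        rw [abs_zero] at h0
        exact h0.mono_left nhdsWithin_le_nhds
      filter_upwards [habs.eventually_lt_const hpos] with δ hδ _ _
      exact hδ
    · filter_upwards with δ h1 h2
      exact absurd ⟨h1, h2⟩ ha
  have hpos : ∀ᶠ δ in nhdsWithin (0:ℝ) (Set.Ioi 0), 0 < δ := by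
    filter_upwards [self_mem_nhdsWithin] with δ hδ
    exact hδ
  -- explicit eventual form
  set G : ℝ → ℂ := fun δ =>
    (Complex.I * lam j * f (p δ) - Complex.I * lam k * f (p δ))
    - (Complex.I * lam j * f (q δ) - Complex.I * lam k * f (q δ))
    + ((γ:ℂ) * (∑ b : Fin N,
          (if b = j ∨ b = k then 0 else eps j b x) * f (permPt (Equiv.swap j b) (p δ))
        - ∑ b : Fin N,
          (if b = j ∨ b = k then 0 else eps k b x) * f (permPt (Equiv.swap k b) (p δ)))
      - (γ:ℂ) * (∑ b : Fin N,
          (if b = k then -1 else if b = j then 0 else eps j b x)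
            * f (permPt (Equiv.swap j b) (q δ))
        - ∑ b : Fin N,
          (if b = j then 1 else if b = k then 0 else eps k b x)
            * f (permPt (Equiv.swap k b) (q δ)))) with hG
  have hevent : (fun δ : ℝ =>
      (pd j f (jumpShift j k δ x) - pd k f (jumpShift j k δ x))
        - (pd j f (jumpShift j k (-δ) x) - pd k f (jumpShift j k (-δ) x)))
      =ᶠ[nhdsWithin (0:ℝ) (Set.Ioi 0)] G := by
    filter_upwards [hb, hpos] with δ hbδ hδ
    have hbδ' : ∀ a : Fin N, a ≠ j → a ≠ k → |(-δ)| < |x a - x j| := by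
      intro a h1 h2; rw [abs_neg]; exact hbδ a h1 h2
    have hregp : p δ ∈ regPts N := reg_shift hjkne hwall (ne_of_gt hδ) hbδ hne
    have hregq : q δ ∈ regPts N :=
      reg_shift hjkne hwall (neg_ne_zero.2 (ne_of_gt hδ)) hbδ' hne
    have e1 := eigen_expand γ lam f hf
    rw [show jumpShift j k δ x = p δ from rfl, show jumpShift j k (-δ) x = q δ from rfl,
      e1 j (p δ) hregp, e1 k (p δ) hregp, e1 j (q δ) hregq, e1 k (q δ) hregq, hG]
    simp only
    have s1 : (∑ b : Fin N, eps j b (p δ) * f (permPt (Equiv.swap j b) (p δ)))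
        = ∑ b : Fin N, (if b = j ∨ b = k then 0 else eps j b x)
            * f (permPt (Equiv.swap j b) (p δ)) := by
      refine Finset.sum_congr rfl fun b _ => ?_
      simp only [hp]
      rw [eps_shift_jp hjk hwall hδ hbδ]
    have s2 : (∑ b : Fin N, eps k b (p δ) * f (permPt (Equiv.swap k b) (p δ)))
        = ∑ b : Fin N, (if b = j ∨ b = k then 0 else eps k b x)
            * f (permPt (Equiv.swap k b) (p δ)) := by
      refine Finset.sum_congr rfl fun b _ => ?_
      simp only [hp]
      rw [eps_shift_kp hjk hwall hδ hbδ]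
    have s3 : (∑ b : Fin N, eps j b (q δ) * f (permPt (Equiv.swap j b) (q δ)))
        = ∑ b : Fin N, (if b = k then -1 else if b = j then 0 else eps j b x)
            * f (permPt (Equiv.swap j b) (q δ)) := by
      refine Finset.sum_congr rfl fun b _ => ?_
      simp only [hq]
      rw [eps_shift_jm hjk hwall hδ hbδ]
    have s4 : (∑ b : Fin N, eps k b (q δ) * f (permPt (Equiv.swap k b) (q δ)))
        = ∑ b : Fin N, (if b = j then 1 else if b = k then 0 else eps k b x)
            * f (permPt (Equiv.swap k b) (q δ)) := by
      refine Finset.sum_congr rfl fun b _ => ?_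
      simp only [hq]
      rw [eps_shift_km hjk hwall hδ hbδ]
    rw [s1, s2, s3, s4]
    ring
  -- limits
  have hptend : Tendsto p (nhdsWithin (0:ℝ) (Set.Ioi 0)) (nhds x) := by
    have h0 := (continuous_jumpShift j k hjkne x).tendsto 0
    rw [jumpShift_zero hjkne] at h0
    exact h0.mono_left nhdsWithin_le_nhds
  have hqtend : Tendsto q (nhdsWithin (0:ℝ) (Set.Ioi 0)) (nhds x) := by
    have hneg : Tendsto (fun δ : ℝ => -δ) (nhdsWithin (0:ℝ) (Set.Ioi 0)) (nhds 0) := by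
      have h0 : Tendsto (fun δ : ℝ => -δ) (nhds (0:ℝ)) (nhds (-0)) :=
        continuous_neg.tendsto 0
      rw [neg_zero] at h0
      exact h0.mono_left nhdsWithin_le_nhds
    have h0 := (continuous_jumpShift j k hjkne x).tendsto 0
    rw [jumpShift_zero hjkne] at h0
    exact h0.comp hneg
  have hfp : ∀ w : Equiv.Perm (Fin N),
      Tendsto (fun δ => f (permPt w (p δ))) (nhdsWithin (0:ℝ) (Set.Ioi 0))
        (nhds (f (permPt w x))) := fun w =>
    ((hf.1.1.comp (continuous_permPt w)).tendsto x).comp hptend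
  have hfq : ∀ w : Equiv.Perm (Fin N),
      Tendsto (fun δ => f (permPt w (q δ))) (nhdsWithin (0:ℝ) (Set.Ioi 0))
        (nhds (f (permPt w x))) := fun w =>
    ((hf.1.1.comp (continuous_permPt w)).tendsto x).comp hqtend
  have hfp0 : Tendsto (fun δ => f (p δ)) (nhdsWithin (0:ℝ) (Set.Ioi 0)) (nhds (f x)) :=
    (hf.1.1.tendsto x).comp hptend
  have hfq0 : Tendsto (fun δ => f (q δ)) (nhdsWithin (0:ℝ) (Set.Ioi 0)) (nhds (f x)) :=
    (hf.1.1.tendsto x).comp hqtend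
  set L0 : ℂ :=
    (Complex.I * lam j * f x - Complex.I * lam k * f x)
    - (Complex.I * lam j * f x - Complex.I * lam k * f x)
    + ((γ:ℂ) * (∑ b : Fin N,
          (if b = j ∨ b = k then 0 else eps j b x) * f (permPt (Equiv.swap j b) x)
        - ∑ b : Fin N,
          (if b = j ∨ b = k then 0 else eps k b x) * f (permPt (Equiv.swap k b) x))
      - (γ:ℂ) * (∑ b : Fin N,
          (if b = k then -1 else if b = j then 0 else eps j b x)
            * f (permPt (Equiv.swap j b) x)
        - ∑ b : Fin N,
          (if b = j then 1 else if b = k then 0 else eps k b x)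
            * f (permPt (Equiv.swap k b) x))) with hL0
  have hGlim : Tendsto G (nhdsWithin (0:ℝ) (Set.Ioi 0)) (nhds L0) := by
    rw [hG, hL0]
    exact (((((hfp0.const_mul _).sub (hfp0.const_mul _)).sub
        ((hfq0.const_mul _).sub (hfq0.const_mul _)))).add
      (((tendsto_finset_sum _ fun b _ => (hfp _).const_mul _).sub
          (tendsto_finset_sum _ fun b _ => (hfp _).const_mul _)).const_mul _ |>.sub
        (((tendsto_finset_sum _ fun b _ => (hfq _).const_mul _).sub
          (tendsto_finset_sum _ fun b _ => (hfq _).const_mul _)).const_mul _)))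
  have hwallpt : f (permPt (Equiv.swap j k) x) = f x := by
    rw [permPt_swap_wall x hwall]
  have hwallpt' : f (permPt (Equiv.swap k j) x) = f x := by
    rw [Equiv.swap_comm k j, permPt_swap_wall x hwall]
  have hA : ∑ b : Fin N, (if b = j ∨ b = k then 0 else eps j b x)
        * f (permPt (Equiv.swap j b) x)
      - ∑ b : Fin N, (if b = k then -1 else if b = j then 0 else eps j b x)
        * f (permPt (Equiv.swap j b) x) = f x := by
    rw [← Finset.sum_sub_distrib]
    rw [show (∑ b : Fin N, ((if b = j ∨ b = k then 0 else eps j b x)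
          * f (permPt (Equiv.swap j b) x)
        - (if b = k then -1 else if b = j then 0 else eps j b x)
          * f (permPt (Equiv.swap j b) x)))
        = ∑ b : Fin N, (if b = k then f (permPt (Equiv.swap j b) x) else 0) from
      Finset.sum_congr rfl fun b _ => by
        rcases eq_or_ne b k with rfl | hbk
        · rw [if_pos (Or.inr rfl), if_pos rfl, if_pos rfl]; ring
        rcases eq_or_ne b j with rfl | hbj
        · rw [if_pos (Or.inl rfl), if_neg hbk, if_pos rfl, if_neg hbk]; ring
        · rw [if_neg (by tauto), if_neg hbk, if_neg hbj, if_neg hbk]; ring]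
    rw [Finset.sum_ite_eq' Finset.univ k (fun b => f (permPt (Equiv.swap j b) x)),
      if_pos (Finset.mem_univ k), hwallpt]
  have hB : ∑ b : Fin N, (if b = j then 1 else if b = k then 0 else eps k b x)
        * f (permPt (Equiv.swap k b) x)
      - ∑ b : Fin N, (if b = j ∨ b = k then 0 else eps k b x)
        * f (permPt (Equiv.swap k b) x) = f x := by
    rw [← Finset.sum_sub_distrib]
    rw [show (∑ b : Fin N, ((if b = j then 1 else if b = k then 0 else eps k b x)
          * f (permPt (Equiv.swap k b) x)
        - (if b = j ∨ b = k then 0 else eps k b x)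
          * f (permPt (Equiv.swap k b) x)))
        = ∑ b : Fin N, (if b = j then f (permPt (Equiv.swap k b) x) else 0) from
      Finset.sum_congr rfl fun b _ => by
        rcases eq_or_ne b j with rfl | hbj
        · rw [if_pos rfl, if_pos (Or.inl rfl), if_pos rfl]; ring
        rcases eq_or_ne b k with rfl | hbk
        · rw [if_neg hbj, if_neg hbj, if_pos rfl, if_pos (Or.inr rfl)]; ring
        · rw [if_neg hbj, if_neg hbk, if_neg (by tauto), if_neg hbj]; ring]
    rw [Finset.sum_ite_eq' Finset.univ j (fun b => f (permPt (Equiv.swap k b) x)),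
      if_pos (Finset.mem_univ j), hwallpt']
  have hL0val : L0 = 2 * (γ:ℂ) * f x := by
    rw [hL0]
    linear_combination (γ:ℂ) * hA + (γ:ℂ) * hB
  rw [← hL0val]
  exact hGlim.congr' hevent.symm
end QNLS6
/-- every `f ∈ sol^γ_λ` solves the QNLS eigenvalue problem with eigenvalue
`E = ∑_j λ_j²`: it satisfies the Helmholtz equation on the regular vectors and the
derivative jump conditions with coupling `γ`. -/
theorem statement_6 (N : ℕ) (hN : 1 ≤ N) (γ : ℝ) (lam : Fin N → ℂ)
    (f : Fn N) (hf : memSol γ lam f) :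
    (∀ x ∈ regPts N, -(∑ j : Fin N, pd j (pd j f) x) = (∑ j : Fin N, (lam j) ^ 2) * f x) ∧
    SatisfiesJump γ f := by
  exact ⟨QNLS6.helmholtz γ lam f hf, QNLS6.jump γ lam f hf⟩

end
end
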